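/- arXiv:0806.0541 — 5 statements merged into one kernel-verified Lean document; each statement's English description precedes it below -/
import Mathlib

section
/- Let V be a finite-dimensional real normed vector space, U an open subset of V, and f : U → ℝ a function of class C². Let A : V → V be a linear endomorphism, a ∈ U, and ε > 0 be such that for every real t with |t| < ε one has exp(tA)·a ∈ U and f(exp(tA)·a) = f(a). Then the first derivative of f at a satisfies Df_a(A·a) = 0, and the second derivative satisfies D²f_a(A·a, A·a) + Df_a(A²·a) = 0. -/
/-- Let `V` be a finite-dimensional real normed vector space, `U ⊆ V` open and
`f : U → ℝ` of class `C²`. Let `A : V → V` be a linear endomorphism, `a ∈ U` and `ε > 0` such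
that for `|t| < ε` one has `exp(tA)·a ∈ U` and `f(exp(tA)·a) = f(a)`. Then `Df_a(A·a) = 0` and
`D²f_a(A·a, A·a) + Df_a(A²·a) = 0`. -/
theorem invariance_derivative_relations
    (V : Type*) [NormedAddCommGroup V] [NormedSpace ℝ V] [FiniteDimensional ℝ V]
    (U : Set V) (hU : IsOpen U) (f : V → ℝ) (hf : ContDiffOn ℝ 2 f U)
    (A : V →L[ℝ] V) (a : V) (ha : a ∈ U) (ε : ℝ) (hε : 0 < ε)
    (hmem : ∀ t : ℝ, |t| < ε → (NormedSpace.exp (t • A)) a ∈ U)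
    (hinv : ∀ t : ℝ, |t| < ε → f ((NormedSpace.exp (t • A)) a) = f a) :
    fderiv ℝ f a (A a) = 0 ∧
      fderiv ℝ (fderiv ℝ f) a (A a) (A a) + fderiv ℝ f a (A (A a)) = 0 := by
  set c : ℝ → V := fun t => (NormedSpace.exp (t • A)) a with hc_def
  have hball : IsOpen {t : ℝ | |t| < ε} := by
    have : {t : ℝ | |t| < ε} = Metric.ball (0 : ℝ) ε := by
      ext t; simp [Real.dist_eq]
    rw [this]; exact Metric.isOpen_ball
  have hc : ∀ t : ℝ, HasDerivAt c (A (c t)) t := by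
    intro t
    have h1 := hasDerivAt_exp_smul_const' (𝕂 := ℝ) A t
    have h2 : HasDerivAt (fun u : ℝ => (NormedSpace.exp (u • A)) a)
        ((A * NormedSpace.exp (t • A)) a + (NormedSpace.exp (t • A)) 0) t :=
      h1.clm_apply (hasDerivAt_const t a)
    simpa [hc_def] using h2
  have hc0 : c 0 = a := by simp [hc_def, NormedSpace.exp_zero]
  have hc0' : HasDerivAt c (A a) 0 := by
    have := hc 0; rwa [hc0] at this
  -- first derivative of f ∘ c vanishes on the ball
  have key1 : ∀ t : ℝ, |t| < ε → fderiv ℝ f (c t) (A (c t)) = 0 := by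
    intro t ht
    have hdf : DifferentiableAt ℝ f (c t) :=
      (hf.contDiffAt (hU.mem_nhds (hmem t ht))).differentiableAt (by norm_num)
    have hcomp : HasDerivAt (fun s => f (c s)) (fderiv ℝ f (c t) (A (c t))) t :=
      hdf.hasFDerivAt.comp_hasDerivAt t (hc t)
    have heq : (fun s => f (c s)) =ᶠ[nhds t] fun _ => f a := by
      filter_upwards [hball.mem_nhds ht] with s hs using hinv s hs
    have hconst : HasDerivAt (fun _ : ℝ => f a) (fderiv ℝ f (c t) (A (c t))) t :=
      hcomp.congr_of_eventuallyEq heq.symm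
    exact ((hasDerivAt_const t (f a)).unique hconst).symm
  have h0 : fderiv ℝ f a (A a) = 0 := by
    have := key1 0 (by simpa using hε); rwa [hc0] at this
  refine ⟨h0, ?_⟩
  -- differentiate t ↦ Df(c t)(A (c t)) at 0
  have hdf2 : DifferentiableAt ℝ (fderiv ℝ f) a := by
    have := (hf.contDiffAt (hU.mem_nhds ha)).fderiv_right (m := 1) (by norm_num)
    exact this.differentiableAt one_ne_zero
  have hdf2' : HasFDerivAt (fderiv ℝ f) (fderiv ℝ (fderiv ℝ f) a) (c 0) :=
    hc0 ▸ hdf2.hasFDerivAt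
  have hφ : HasDerivAt (fun t => fderiv ℝ f (c t)) (fderiv ℝ (fderiv ℝ f) a (A a)) 0 :=
    hdf2'.comp_hasDerivAt 0 hc0'
  have hψ : HasDerivAt (fun t => A (c t)) (A (A a)) 0 :=
    A.hasFDerivAt.comp_hasDerivAt 0 hc0'
  have hh : HasDerivAt (fun t => fderiv ℝ f (c t) (A (c t)))
      (fderiv ℝ (fderiv ℝ f) a (A a) (A (c 0)) + fderiv ℝ f (c 0) (A (A a))) 0 :=
    hφ.clm_apply hψ
  rw [hc0] at hh
  have heq2 : (fun t => fderiv ℝ f (c t) (A (c t))) =ᶠ[nhds (0 : ℝ)] fun _ => (0 : ℝ) := by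
    filter_upwards [hball.mem_nhds (by simpa using hε)] with s hs using key1 s hs
  have hconst2 : HasDerivAt (fun _ : ℝ => (0 : ℝ))
      (fderiv ℝ (fderiv ℝ f) a (A a) (A a) + fderiv ℝ f a (A (A a))) 0 :=
    hh.congr_of_eventuallyEq heq2.symm
  exact ((hasDerivAt_const (0 : ℝ) (0 : ℝ)).unique hconst2).symm
end

section
/- Let n ≥ 1 and let F : ℝⁿ → ℝ be of class C² on an open set. Set D(λ) = ∏_{1≤i<j≤n} (λᵢ² − λⱼ²). Then at every point λ = (λ₁,…,λₙ) of the open set with λᵢ ≠ 0 for all i and D(λ) ≠ 0, one has (1/D(λ)) Σᵢ (∂²/∂λᵢ² + (1/λᵢ) ∂/∂λᵢ)(D·F)(λ) = Σᵢ (∂²F/∂λᵢ² + (1/λᵢ) ∂F/∂λᵢ) + 2 Σ_{i<j} (1/(λᵢ−λⱼ))(∂F/∂λᵢ − ∂F/∂λⱼ) + 2 Σ_{i<j} (1/(λᵢ+λⱼ))(∂F/∂λᵢ + ∂F/∂λⱼ), where D·F denotes the product function λ ↦ D(λ)F(λ). -/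
open Finset

-- split double sum into ordered pairs
lemma sum_pairs_split {n : ℕ} (h : Fin n → Fin n → ℝ) (hdiag : ∀ i, h i i = 0) :
    ∑ i, ∑ j, h i j = ∑ i, ∑ j, (if i < j then h i j + h j i else 0) := by
  have e1 : ∀ i j : Fin n, h i j
      = (if i < j then h i j else 0) + (if j < i then h i j else 0) := by
    intro i j
    rcases lt_trichotomy i j with hc | hc | hc
    · simp [hc, not_lt.2 hc.le]
    · simp [hc, hdiag]
    · simp [hc, not_lt.2 hc.le]
  calc ∑ i, ∑ j, h i j
      = (∑ i, ∑ j, (if i < j then h i j else 0))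
        + (∑ i, ∑ j, (if j < i then h i j else 0)) := by
        rw [← Finset.sum_add_distrib]
        refine Finset.sum_congr rfl fun i _ => ?_
        rw [← Finset.sum_add_distrib]
        exact Finset.sum_congr rfl fun j _ => e1 i j
    _ = (∑ i, ∑ j, (if i < j then h i j else 0))
        + (∑ i, ∑ j, (if i < j then h j i else 0)) := by
        congr 1
        rw [Finset.sum_comm]
    _ = ∑ i, ∑ j, (if i < j then h i j + h j i else 0) := by
        rw [← Finset.sum_add_distrib]
        refine Finset.sum_congr rfl fun i _ => ?_
        rw [← Finset.sum_add_distrib]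
        refine Finset.sum_congr rfl fun j _ => ?_
        by_cases hij : i < j <;> simp [hij]

lemma sum_cyclic_zero {n : ℕ} (g : Fin n → Fin n → Fin n → ℝ)
    (hcyc : ∀ i j k, g i j k + g j k i + g k i j = 0) :
    ∑ i, ∑ j, ∑ k, g i j k = 0 := by
  have key : ∀ g' : Fin n × Fin n × Fin n → ℝ,
      ∑ t : Fin n × Fin n × Fin n, g' (t.2.1, t.2.2, t.1) = ∑ t, g' t := by
    intro g'
    exact Fintype.sum_bijective (fun t : Fin n × Fin n × Fin n => (t.2.1, t.2.2, t.1))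
      ⟨fun a b hab => by
          obtain ⟨a1, a2, a3⟩ := a; obtain ⟨b1, b2, b3⟩ := b
          simp only [Prod.mk.injEq] at hab; simp [hab.1, hab.2.1, hab.2.2],
       fun t => ⟨(t.2.2, t.1, t.2.1), rfl⟩⟩ _ _ (fun t => rfl)
  have e1 : ∑ i, ∑ j, ∑ k, g i j k = ∑ t : Fin n × Fin n × Fin n, g t.1 t.2.1 t.2.2 := by
    rw [Fintype.sum_prod_type]
    exact Finset.sum_congr rfl fun i _ => by rw [Fintype.sum_prod_type]
  have e2 : ∑ t : Fin n × Fin n × Fin n, g t.2.1 t.2.2 t.1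
      = ∑ t : Fin n × Fin n × Fin n, g t.1 t.2.1 t.2.2 :=
    key (fun t => g t.1 t.2.1 t.2.2)
  have e3 : ∑ t : Fin n × Fin n × Fin n, g t.2.2 t.1 t.2.1
      = ∑ t : Fin n × Fin n × Fin n, g t.2.1 t.2.2 t.1 :=
    key (fun t => g t.2.1 t.2.2 t.1)
  have h3 : (3 : ℝ) * ∑ t : Fin n × Fin n × Fin n, g t.1 t.2.1 t.2.2 = 0 := by
    calc (3:ℝ) * ∑ t : Fin n × Fin n × Fin n, g t.1 t.2.1 t.2.2
        = (∑ t : Fin n × Fin n × Fin n, g t.1 t.2.1 t.2.2)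
          + ((∑ t : Fin n × Fin n × Fin n, g t.2.1 t.2.2 t.1)
          + (∑ t : Fin n × Fin n × Fin n, g t.2.2 t.1 t.2.1)) := by
          rw [e2, e3, e2]; ring
      _ = ∑ t : Fin n × Fin n × Fin n, (g t.1 t.2.1 t.2.2 + (g t.2.1 t.2.2 t.1 + g t.2.2 t.1 t.2.1)) := by
          rw [Finset.sum_add_distrib, Finset.sum_add_distrib]
      _ = 0 := by
          refine Finset.sum_eq_zero fun t _ => ?_
          have := hcyc t.1 t.2.1 t.2.2
          linarith
  rw [e1]
  have := h3
  linarith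

lemma sum_erase_eq_sum_ite {n : ℕ} (i : Fin n) (t : Fin n → ℝ) :
    ∑ j ∈ Finset.univ.erase i, t j = ∑ j, if j = i then 0 else t j := by
  rw [Finset.sum_erase_eq_sub (Finset.mem_univ i)]
  have : ∀ j : Fin n, (if j = i then 0 else t j) = t j - (if j = i then t j else 0) := by
    intro j; by_cases hj : j = i <;> simp [hj]
  rw [Finset.sum_congr rfl fun j _ => this j, Finset.sum_sub_distrib]
  congr 1
  simp

lemma sum_over_pairs {n : ℕ} (i : Fin n) (A : Fin n → Fin n → ℝ)
    (hA : ∀ j k, j ≠ i → k ≠ i → A j k = 0) :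
    ∑ p ∈ Finset.univ.filter (fun p : Fin n × Fin n => p.1 < p.2), A p.1 p.2
      = ∑ j ∈ Finset.univ.erase i, (if i < j then A i j else A j i) := by
  rw [Finset.sum_filter]
  rw [← Finset.univ_product_univ, Finset.sum_product]
  have inner_ne : ∀ j : Fin n, j ≠ i →
      (∑ k, if j < k then A j k else 0) = if j < i then A j i else 0 := by
    intro j hj
    refine Finset.sum_eq_single i (fun k _ hk => ?_) (by simp)
    by_cases hjk : j < k <;> simp [hjk, hA j k hj hk]
  have split : ∑ j, (∑ k, if j < k then A j k else 0)
      = (∑ k, if i < k then A i k else 0) + ∑ j ∈ Finset.univ.erase i, (∑ k, if j < k then A j k else 0) :=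
    (Finset.add_sum_erase _ _ (Finset.mem_univ i)).symm
  rw [split]
  have e1 : ∑ j ∈ Finset.univ.erase i, (∑ k, if j < k then A j k else 0)
      = ∑ j ∈ Finset.univ.erase i, (if j < i then A j i else 0) :=
    Finset.sum_congr rfl fun j hj => inner_ne j (Finset.ne_of_mem_erase hj)
  have e2 : (∑ k, if i < k then A i k else 0) = ∑ k ∈ Finset.univ.erase i, (if i < k then A i k else 0) := by
    rw [sum_erase_eq_sum_ite]
    refine Finset.sum_congr rfl fun k _ => ?_
    by_cases hk : k = i <;> simp [hk]
  rw [e1, e2, ← Finset.sum_add_distrib]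
  refine Finset.sum_congr rfl fun j hj => ?_
  have hji : j ≠ i := Finset.ne_of_mem_erase hj
  rcases lt_trichotomy i j with hc | hc | hc
  · simp [hc, not_lt.2 hc.le]
  · exact absurd hc.symm hji
  · simp [hc, not_lt.2 hc.le]



noncomputable def projR {n : ℕ} (a : Fin n) : (Fin n → ℝ) →L[ℝ] ℝ :=
  ContinuousLinearMap.proj a

def Kp (n : ℕ) : Finset (Fin n × Fin n) := Finset.univ.filter fun p => p.1 < p.2

def fpair {n : ℕ} (p : Fin n × Fin n) (y : Fin n → ℝ) : ℝ := y p.1 ^ 2 - y p.2 ^ 2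

noncomputable def Lmap {n : ℕ} (p : Fin n × Fin n) (x : Fin n → ℝ) : (Fin n → ℝ) →L[ℝ] ℝ :=
  (2 * x p.1) • projR p.1 - (2 * x p.2) • projR p.2

def el {n : ℕ} (i j : Fin n) : ℝ := if j = i then 1 else 0

def lfun {n : ℕ} (i : Fin n) (p : Fin n × Fin n) (x : Fin n → ℝ) : ℝ :=
  2 * el i p.1 * x p.1 - 2 * el i p.2 * x p.2

lemma hasFDerivAt_fpair {n : ℕ} (p : Fin n × Fin n) (x : Fin n → ℝ) :
    HasFDerivAt (fpair p) (Lmap p x) x := by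
  have ha : HasFDerivAt (fun y : Fin n → ℝ => y p.1) (projR p.1) x := (projR p.1).hasFDerivAt
  have hb : HasFDerivAt (fun y : Fin n → ℝ => y p.2) (projR p.2) x := (projR p.2).hasFDerivAt
  have h1 : HasFDerivAt (fun y : Fin n → ℝ => y p.1 * y p.1 - y p.2 * y p.2)
      ((x p.1 • projR p.1 + x p.1 • projR p.1) - (x p.2 • projR p.2 + x p.2 • projR p.2)) x :=
    (ha.mul ha).sub (hb.mul hb)
  have hfun : fpair p = fun y : Fin n → ℝ => y p.1 * y p.1 - y p.2 * y p.2 := by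
    funext y; simp only [fpair]; ring
  have hder : Lmap p x
      = ((x p.1 • projR p.1 + x p.1 • projR p.1) - (x p.2 • projR p.2 + x p.2 • projR p.2)) := by
    ext v
    simp [Lmap, projR, two_mul]
    ring
  rw [hfun, hder]
  exact h1

lemma contDiff_fpair {n : ℕ} (p : Fin n × Fin n) : ContDiff ℝ 2 (fpair p) := by
  have h1 : ContDiff ℝ 2 (fun y : Fin n → ℝ => y p.1) := (projR p.1).contDiff
  have h2 : ContDiff ℝ 2 (fun y : Fin n → ℝ => y p.2) := (projR p.2).contDiff
  exact (h1.pow 2).sub (h2.pow 2)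

lemma hasFDerivAt_prodK {n : ℕ} (x : Fin n → ℝ) :
    HasFDerivAt (fun y => ∏ p ∈ Kp n, fpair p y)
      (∑ p ∈ Kp n, (∏ q ∈ (Kp n).erase p, fpair q x) • Lmap p x) x :=
  HasFDerivAt.finset_prod (fun p _ => hasFDerivAt_fpair p x)

lemma Lmap_apply_single {n : ℕ} (p : Fin n × Fin n) (x : Fin n → ℝ) (i : Fin n) :
    Lmap p x (Pi.single i 1) = lfun i p x := by
  simp [Lmap, lfun, projR, el, Pi.single_apply]

lemma hasFDerivAt_lfun {n : ℕ} (i : Fin n) (p : Fin n × Fin n) (x : Fin n → ℝ) :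
    HasFDerivAt (lfun i p)
      ((2 * el i p.1) • projR p.1 - (2 * el i p.2) • projR p.2) x := by
  have ha : HasFDerivAt (fun y : Fin n → ℝ => y p.1) (projR p.1) x := (projR p.1).hasFDerivAt
  have hb : HasFDerivAt (fun y : Fin n → ℝ => y p.2) (projR p.2) x := (projR p.2).hasFDerivAt
  exact (ha.const_mul (2 * el i p.1)).sub (hb.const_mul (2 * el i p.2))

/-- derivative of `x ↦ ∑_{p∈K} (∏_{q≠p} f_q x) * ℓ_{i,p}(x)` -/
lemma hasFDerivAt_psi {n : ℕ} (i : Fin n) (x : Fin n → ℝ) :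
    HasFDerivAt (fun y => ∑ p ∈ Kp n, (∏ q ∈ (Kp n).erase p, fpair q y) * lfun i p y)
      (∑ p ∈ Kp n,
        ((∏ q ∈ (Kp n).erase p, fpair q x) •
            ((2 * el i p.1) • projR p.1 - (2 * el i p.2) • projR p.2)
          + lfun i p x •
            (∑ q ∈ (Kp n).erase p,
              (∏ r ∈ ((Kp n).erase p).erase q, fpair r x) • Lmap q x))) x := by
  refine HasFDerivAt.fun_sum fun p _ => ?_
  have hprod : HasFDerivAt (fun y => ∏ q ∈ (Kp n).erase p, fpair q y)
      (∑ q ∈ (Kp n).erase p, (∏ r ∈ ((Kp n).erase p).erase q, fpair r x) • Lmap q x) x :=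
    HasFDerivAt.finset_prod (fun q _ => hasFDerivAt_fpair q x)
  exact hprod.mul (hasFDerivAt_lfun i p x)

section
variable {n : ℕ} {lam : Fin n → ℝ}

lemma mu_ne (hfne : ∀ p ∈ Kp n, fpair p lam ≠ 0) {i j : Fin n} (hij : i ≠ j) : lam i ^ 2 ≠ lam j ^ 2 := by
  rcases lt_or_gt_of_ne hij with h | h
  · have : fpair (i, j) lam ≠ 0 := hfne (i, j) (by simp [Kp, h])
    exact sub_ne_zero.mp this
  · have : fpair (j, i) lam ≠ 0 := hfne (j, i) (by simp [Kp, h])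
    exact (sub_ne_zero.mp this).symm

lemma S_eq (i : Fin n) :
    ∑ p ∈ Kp n, lfun i p lam / fpair p lam
      = ∑ j ∈ Finset.univ.erase i, 2 * lam i / (lam i ^ 2 - lam j ^ 2) := by
  rw [show Kp n = Finset.univ.filter (fun p : Fin n × Fin n => p.1 < p.2) from rfl]
  rw [sum_over_pairs i (fun j k => lfun i (j, k) lam / fpair (j, k) lam)
    (fun j k hj hk => by simp [lfun, el, hj, hk])]
  refine Finset.sum_congr rfl fun j hj => ?_
  have hji : j ≠ i := Finset.ne_of_mem_erase hj
  by_cases hij : i < j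
  · simp [hij, lfun, fpair, el, hji]
  · simp only [hij, if_false]
    rw [show fpair (j, i) lam = -(lam i ^ 2 - lam j ^ 2) by simp [fpair]; try ring]
    rw [show lfun i (j, i) lam = -(2 * lam i) by simp [lfun, el, hji]; try ring]
    rw [neg_div_neg_eq]

lemma Q_eq (i : Fin n) :
    ∑ p ∈ Kp n, (lfun i p lam / fpair p lam) ^ 2
      = ∑ j ∈ Finset.univ.erase i, (2 * lam i / (lam i ^ 2 - lam j ^ 2)) ^ 2 := by
  rw [show Kp n = Finset.univ.filter (fun p : Fin n × Fin n => p.1 < p.2) from rfl]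
  rw [sum_over_pairs i (fun j k => (lfun i (j, k) lam / fpair (j, k) lam) ^ 2)
    (fun j k hj hk => by simp [lfun, el, hj, hk])]
  refine Finset.sum_congr rfl fun j hj => ?_
  have hji : j ≠ i := Finset.ne_of_mem_erase hj
  by_cases hij : i < j
  · simp [hij, lfun, fpair, el, hji]
  · simp only [hij, if_false]
    rw [show fpair (j, i) lam = -(lam i ^ 2 - lam j ^ 2) by simp [fpair]; try ring]
    rw [show lfun i (j, i) lam = -(2 * lam i) by simp [lfun, el, hji]; try ring]
    rw [neg_div_neg_eq]

lemma C_eq (i : Fin n) :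
    ∑ p ∈ Kp n, (2 * el i p.1 * el i p.1 - 2 * el i p.2 * el i p.2) / fpair p lam
      = ∑ j ∈ Finset.univ.erase i, 2 / (lam i ^ 2 - lam j ^ 2) := by
  rw [show Kp n = Finset.univ.filter (fun p : Fin n × Fin n => p.1 < p.2) from rfl]
  rw [sum_over_pairs i
    (fun j k => (2 * el i j * el i j - 2 * el i k * el i k) / fpair (j, k) lam)
    (fun j k hj hk => by simp [el, hj, hk])]
  refine Finset.sum_congr rfl fun j hj => ?_
  have hji : j ≠ i := Finset.ne_of_mem_erase hj
  by_cases hij : i < j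
  · simp [hij, fpair, el, hji]
  · simp only [hij, if_false]
    rw [show fpair (j, i) lam = -(lam i ^ 2 - lam j ^ 2) by simp [fpair]; try ring]
    rw [show (2 * el i j * el i j - 2 * el i i * el i i : ℝ) = -2 by simp [el, hji]]
    rw [show (-2 : ℝ) / -(lam i ^ 2 - lam j ^ 2) = 2 / (lam i ^ 2 - lam j ^ 2) from
      neg_div_neg_eq 2 _]

lemma prod_erase_eq (hfne : ∀ p ∈ Kp n, fpair p lam ≠ 0) {p : Fin n × Fin n} (hp : p ∈ Kp n) :
    ∏ q ∈ (Kp n).erase p, fpair q lam = (∏ q ∈ Kp n, fpair q lam) / fpair p lam := by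
  rw [eq_div_iff (hfne p hp), mul_comm]
  exact Finset.mul_prod_erase (Kp n) (fun q => fpair q lam) hp

lemma prod_erase2_eq (hfne : ∀ p ∈ Kp n, fpair p lam ≠ 0) {p q : Fin n × Fin n} (hp : p ∈ Kp n) (hq : q ∈ (Kp n).erase p) :
    ∏ r ∈ ((Kp n).erase p).erase q, fpair r lam
      = (∏ r ∈ Kp n, fpair r lam) / (fpair p lam * fpair q lam) := by
  have hqK : q ∈ Kp n := Finset.mem_of_mem_erase hq
  rw [eq_div_iff (mul_ne_zero (hfne p hp) (hfne q hqK))]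
  calc (∏ r ∈ ((Kp n).erase p).erase q, fpair r lam) * (fpair p lam * fpair q lam)
      = fpair p lam * (fpair q lam * ∏ r ∈ ((Kp n).erase p).erase q, fpair r lam) := by ring
    _ = fpair p lam * ∏ r ∈ (Kp n).erase p, fpair r lam := by
        rw [Finset.mul_prod_erase ((Kp n).erase p) (fun r => fpair r lam) hq]
    _ = ∏ r ∈ Kp n, fpair r lam := Finset.mul_prod_erase (Kp n) (fun r => fpair r lam) hp
lemma Dd_apply (hfne : ∀ p ∈ Kp n, fpair p lam ≠ 0) (i : Fin n) :
    (∑ p ∈ Kp n, (∏ q ∈ (Kp n).erase p, fpair q lam) • Lmap p lam) (Pi.single i 1)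
      = (∏ p ∈ Kp n, fpair p lam)
        * ∑ j ∈ Finset.univ.erase i, 2 * lam i / (lam i ^ 2 - lam j ^ 2) := by
  rw [ContinuousLinearMap.sum_apply]
  have e1 : ∀ p ∈ Kp n, ((∏ q ∈ (Kp n).erase p, fpair q lam) • Lmap p lam) (Pi.single i 1)
      = (∏ r ∈ Kp n, fpair r lam) * (lfun i p lam / fpair p lam) := by
    intro p hp
    rw [ContinuousLinearMap.smul_apply, Lmap_apply_single, smul_eq_mul, prod_erase_eq hfne hp]
    ring
  rw [Finset.sum_congr rfl e1, ← Finset.mul_sum, S_eq i]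

lemma Psi_apply (hfne : ∀ p ∈ Kp n, fpair p lam ≠ 0) (i : Fin n) :
    (∑ p ∈ Kp n,
        ((∏ q ∈ (Kp n).erase p, fpair q lam) •
            ((2 * el i p.1) • projR p.1 - (2 * el i p.2) • projR p.2)
          + lfun i p lam •
            (∑ q ∈ (Kp n).erase p,
              (∏ r ∈ ((Kp n).erase p).erase q, fpair r lam) • Lmap q lam))) (Pi.single i 1)
      = (∏ p ∈ Kp n, fpair p lam) *
          ((∑ j ∈ Finset.univ.erase i, 2 * lam i / (lam i ^ 2 - lam j ^ 2))
              * (∑ j ∈ Finset.univ.erase i, 2 * lam i / (lam i ^ 2 - lam j ^ 2))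
            - ∑ j ∈ Finset.univ.erase i, (2 * lam i / (lam i ^ 2 - lam j ^ 2)) ^ 2
            + ∑ j ∈ Finset.univ.erase i, 2 / (lam i ^ 2 - lam j ^ 2)) := by
  have hP : ∀ p ∈ Kp n, ∀ x : Fin n → ℝ,
      ((∏ q ∈ (Kp n).erase p, fpair q lam) •
            ((2 * el i p.1) • projR p.1 - (2 * el i p.2) • projR p.2)
          + lfun i p lam •
            (∑ q ∈ (Kp n).erase p,
              (∏ r ∈ ((Kp n).erase p).erase q, fpair r lam) • Lmap q lam)) (Pi.single i 1)
      = (∏ q ∈ (Kp n).erase p, fpair q lam)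
          * (2 * el i p.1 * el i p.1 - 2 * el i p.2 * el i p.2)
        + lfun i p lam *
            (∑ q ∈ (Kp n).erase p,
              (∏ r ∈ ((Kp n).erase p).erase q, fpair r lam) * lfun i q lam) := by
    intro p hp x
    rw [ContinuousLinearMap.add_apply, ContinuousLinearMap.smul_apply,
      ContinuousLinearMap.smul_apply, ContinuousLinearMap.sum_apply, smul_eq_mul, smul_eq_mul]
    congr 1
    · congr 1
      rw [ContinuousLinearMap.sub_apply, ContinuousLinearMap.smul_apply,
        ContinuousLinearMap.smul_apply]
      simp [projR, el, Pi.single_apply, smul_eq_mul]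
    · congr 1
      refine Finset.sum_congr rfl fun q hq => ?_
      rw [ContinuousLinearMap.smul_apply, Lmap_apply_single, smul_eq_mul]
  set P := ∏ p ∈ Kp n, fpair p lam with hPdef
  set T1 := ∑ q ∈ Kp n, lfun i q lam / fpair q lam with hT1
  rw [ContinuousLinearMap.sum_apply]
  have e1 : ∀ p ∈ Kp n,
      ((∏ q ∈ (Kp n).erase p, fpair q lam) •
            ((2 * el i p.1) • projR p.1 - (2 * el i p.2) • projR p.2)
          + lfun i p lam •
            (∑ q ∈ (Kp n).erase p,
              (∏ r ∈ ((Kp n).erase p).erase q, fpair r lam) • Lmap q lam)) (Pi.single i 1)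
      = P * ((2 * el i p.1 * el i p.1 - 2 * el i p.2 * el i p.2) / fpair p lam)
        + P * ((lfun i p lam / fpair p lam) * T1)
        - P * ((lfun i p lam / fpair p lam) * (lfun i p lam / fpair p lam)) := by
    intro p hp
    rw [hP p hp lam]
    have e2 : ∑ q ∈ (Kp n).erase p,
        (∏ r ∈ ((Kp n).erase p).erase q, fpair r lam) * lfun i q lam
        = (P / fpair p lam) * (T1 - lfun i p lam / fpair p lam) := by
      have e3 : ∀ q ∈ (Kp n).erase p,
          (∏ r ∈ ((Kp n).erase p).erase q, fpair r lam) * lfun i q lam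
          = (P / fpair p lam) * (lfun i q lam / fpair q lam) := by
        intro q hq
        rw [prod_erase2_eq hfne hp hq]
        ring
      rw [Finset.sum_congr rfl e3, ← Finset.mul_sum]
      congr 1
      rw [hT1, Finset.sum_erase_eq_sub hp]
    rw [e2, prod_erase_eq hfne hp]
    ring
  rw [Finset.sum_congr rfl e1]
  rw [Finset.sum_sub_distrib, Finset.sum_add_distrib, ← Finset.mul_sum, ← Finset.mul_sum,
    ← Finset.mul_sum]
  have eC := C_eq (lam := lam) i
  have eS := S_eq (lam := lam) i
  have eQ := Q_eq (lam := lam) i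
  have e4 : ∑ p ∈ Kp n, (lfun i p lam / fpair p lam) * T1 = T1 * T1 := by
    rw [← Finset.sum_mul, ← hT1]
  have e5 : ∑ p ∈ Kp n, (lfun i p lam / fpair p lam) * (lfun i p lam / fpair p lam)
      = ∑ p ∈ Kp n, (lfun i p lam / fpair p lam) ^ 2 := by
    refine Finset.sum_congr rfl fun p _ => ?_; ring
  rw [e4, e5, eC, eQ]
  rw [hT1, eS]
  ring

set_option maxHeartbeats 1000000 in
lemma claimA (hmu : ∀ i j : Fin n, i ≠ j → lam i ^ 2 ≠ lam j ^ 2)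
    (hne : ∀ i, lam i ≠ 0) :
    ∑ i : Fin n,
      ((∑ j ∈ Finset.univ.erase i, 2 * lam i / (lam i ^ 2 - lam j ^ 2))
          * (∑ j ∈ Finset.univ.erase i, 2 * lam i / (lam i ^ 2 - lam j ^ 2))
        - ∑ j ∈ Finset.univ.erase i, (2 * lam i / (lam i ^ 2 - lam j ^ 2)) ^ 2
        + ∑ j ∈ Finset.univ.erase i, 2 / (lam i ^ 2 - lam j ^ 2)
        + (1 / lam i) * ∑ j ∈ Finset.univ.erase i, 2 * lam i / (lam i ^ 2 - lam j ^ 2)) = 0 := by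
  have hsub : ∀ i j : Fin n, i ≠ j → lam i ^ 2 - lam j ^ 2 ≠ 0 :=
    fun i j hij => sub_ne_zero.2 (hmu i j hij)
  -- (1/λi) * S i = R i
  have eR : ∀ i : Fin n,
      (1 / lam i) * ∑ j ∈ Finset.univ.erase i, 2 * lam i / (lam i ^ 2 - lam j ^ 2)
        = ∑ j ∈ Finset.univ.erase i, 2 / (lam i ^ 2 - lam j ^ 2) := by
    intro i
    rw [Finset.mul_sum]
    refine Finset.sum_congr rfl fun j hj => ?_
    have hji : j ≠ i := Finset.ne_of_mem_erase hj
    have d1 : lam i ≠ 0 := hne i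
    have d2 : lam i ^ 2 - lam j ^ 2 ≠ 0 := hsub i j (fun h => hji h.symm)
    field_simp
  -- S i * S i - Q i  = triple sum
  have eT : ∀ i : Fin n,
      (∑ j ∈ Finset.univ.erase i, 2 * lam i / (lam i ^ 2 - lam j ^ 2))
          * (∑ j ∈ Finset.univ.erase i, 2 * lam i / (lam i ^ 2 - lam j ^ 2))
        - ∑ j ∈ Finset.univ.erase i, (2 * lam i / (lam i ^ 2 - lam j ^ 2)) ^ 2
      = ∑ j : Fin n, ∑ k : Fin n,
          (if i = j ∨ i = k ∨ j = k then 0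
            else (2 * lam i / (lam i ^ 2 - lam j ^ 2)) * (2 * lam i / (lam i ^ 2 - lam k ^ 2))) := by
    intro i
    have hmulsum : (∑ j ∈ Finset.univ.erase i, 2 * lam i / (lam i ^ 2 - lam j ^ 2))
          * (∑ j ∈ Finset.univ.erase i, 2 * lam i / (lam i ^ 2 - lam j ^ 2))
        = ∑ j ∈ Finset.univ.erase i, ∑ k ∈ Finset.univ.erase i,
            (2 * lam i / (lam i ^ 2 - lam j ^ 2)) * (2 * lam i / (lam i ^ 2 - lam k ^ 2)) := by
      rw [Finset.sum_mul_sum]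
    rw [hmulsum]
    have step1 : ∑ j ∈ Finset.univ.erase i, ∑ k ∈ Finset.univ.erase i,
            (2 * lam i / (lam i ^ 2 - lam j ^ 2)) * (2 * lam i / (lam i ^ 2 - lam k ^ 2))
          - ∑ j ∈ Finset.univ.erase i, (2 * lam i / (lam i ^ 2 - lam j ^ 2)) ^ 2
        = ∑ j ∈ Finset.univ.erase i, ∑ k ∈ (Finset.univ.erase i).erase j,
            (2 * lam i / (lam i ^ 2 - lam j ^ 2)) * (2 * lam i / (lam i ^ 2 - lam k ^ 2)) := by
      rw [← Finset.sum_sub_distrib]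
      refine Finset.sum_congr rfl fun j hj => ?_
      rw [Finset.sum_erase_eq_sub hj]
      congr 1
      ring
    rw [step1]
    -- extend to full sums
    have outer : ∀ j : Fin n, j ∉ Finset.univ.erase i →
        (∑ k : Fin n, (if i = j ∨ i = k ∨ j = k then 0
          else (2 * lam i / (lam i ^ 2 - lam j ^ 2)) * (2 * lam i / (lam i ^ 2 - lam k ^ 2)))) = 0 := by
      intro j hj
      have : j = i := by simpa using hj
      subst this
      refine Finset.sum_eq_zero fun k _ => by simp
    rw [← Finset.sum_subset (Finset.subset_univ (Finset.univ.erase i)) (fun j _ hj => outer j hj)]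
    refine Finset.sum_congr rfl fun j hj => ?_
    have hji : j ≠ i := Finset.ne_of_mem_erase hj
    have inner0 : ∀ k : Fin n, k ∉ (Finset.univ.erase i).erase j →
        (if i = j ∨ i = k ∨ j = k then 0
          else (2 * lam i / (lam i ^ 2 - lam j ^ 2)) * (2 * lam i / (lam i ^ 2 - lam k ^ 2))) = 0 := by
      intro k hk
      have : k = j ∨ k = i := by
        by_contra hcon
        push_neg at hcon
        exact hk (Finset.mem_erase.2 ⟨hcon.1, Finset.mem_erase.2 ⟨hcon.2, Finset.mem_univ k⟩⟩)
      rcases this with h | h <;> subst h <;> simp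
    rw [← Finset.sum_subset (Finset.subset_univ ((Finset.univ.erase i).erase j))
      (fun k _ hk => inner0 k hk)]
    refine Finset.sum_congr rfl fun k hk => ?_
    have hkj : k ≠ j := (Finset.mem_erase.1 hk).1
    have hki : k ≠ i := (Finset.mem_erase.1 (Finset.mem_erase.1 hk).2).1
    have hcond : ¬ (i = j ∨ i = k ∨ j = k) := by
      push_neg
      exact ⟨fun h => hji h.symm, fun h => hki h.symm, fun h => hkj h.symm⟩
    rw [if_neg hcond]
  -- the triple sums cancel cyclically
  have eTriple : ∑ i : Fin n, ∑ j : Fin n, ∑ k : Fin n,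
      (if i = j ∨ i = k ∨ j = k then 0
        else (2 * lam i / (lam i ^ 2 - lam j ^ 2)) * (2 * lam i / (lam i ^ 2 - lam k ^ 2))) = 0 := by
    refine sum_cyclic_zero _ fun i j k => ?_
    by_cases hd : i = j ∨ i = k ∨ j = k
    · have h2 : (j = k ∨ j = i ∨ k = i) := by tauto
      have h3 : (k = i ∨ k = j ∨ i = j) := by tauto
      rw [if_pos hd, if_pos h2, if_pos h3]
      ring
    · push_neg at hd
      obtain ⟨hij, hik, hjk⟩ := hd
      have h2 : ¬ (j = k ∨ j = i ∨ k = i) := by tauto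
      have h3 : ¬ (k = i ∨ k = j ∨ i = j) := by tauto
      rw [if_neg (by tauto), if_neg h2, if_neg h3]
      have d1 : lam i ^ 2 - lam j ^ 2 ≠ 0 := hsub i j hij
      have d2 : lam i ^ 2 - lam k ^ 2 ≠ 0 := hsub i k hik
      have d3 : lam j ^ 2 - lam k ^ 2 ≠ 0 := hsub j k hjk
      have d4 : lam j ^ 2 - lam i ^ 2 ≠ 0 := hsub j i (Ne.symm hij)
      have d5 : lam k ^ 2 - lam i ^ 2 ≠ 0 := hsub k i (Ne.symm hik)
      have d6 : lam k ^ 2 - lam j ^ 2 ≠ 0 := hsub k j (Ne.symm hjk)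
      field_simp
      ring
  -- the pair sums cancel antisymmetrically
  have ePair : ∑ i : Fin n, ∑ j ∈ Finset.univ.erase i, (2 / (lam i ^ 2 - lam j ^ 2)
      + 2 / (lam i ^ 2 - lam j ^ 2)) = 0 := by
    have conv : ∀ i : Fin n, ∑ j ∈ Finset.univ.erase i, (2 / (lam i ^ 2 - lam j ^ 2)
        + 2 / (lam i ^ 2 - lam j ^ 2))
        = ∑ j : Fin n, (if i = j then 0 else 4 / (lam i ^ 2 - lam j ^ 2)) := by
      intro i
      rw [sum_erase_eq_sum_ite]
      refine Finset.sum_congr rfl fun j _ => ?_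
      by_cases hij : j = i
      · simp [hij]
      · rw [if_neg hij, if_neg (fun h => hij h.symm)]
        ring
    rw [Finset.sum_congr rfl fun i _ => conv i]
    rw [sum_pairs_split _ (fun i => by simp)]
    refine Finset.sum_eq_zero fun i _ => Finset.sum_eq_zero fun j _ => ?_
    by_cases hij : i < j
    · rw [if_pos hij]
      have hne' : i ≠ j := ne_of_lt hij
      rw [if_neg hne', if_neg (Ne.symm hne')]
      have d1 : lam i ^ 2 - lam j ^ 2 ≠ 0 := hsub i j hne'
      have d2 : lam j ^ 2 - lam i ^ 2 ≠ 0 := hsub j i (Ne.symm hne')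
      field_simp
      ring
    · rw [if_neg hij]
  calc ∑ i : Fin n,
      ((∑ j ∈ Finset.univ.erase i, 2 * lam i / (lam i ^ 2 - lam j ^ 2))
          * (∑ j ∈ Finset.univ.erase i, 2 * lam i / (lam i ^ 2 - lam j ^ 2))
        - ∑ j ∈ Finset.univ.erase i, (2 * lam i / (lam i ^ 2 - lam j ^ 2)) ^ 2
        + ∑ j ∈ Finset.univ.erase i, 2 / (lam i ^ 2 - lam j ^ 2)
        + (1 / lam i) * ∑ j ∈ Finset.univ.erase i, 2 * lam i / (lam i ^ 2 - lam j ^ 2))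
      = ∑ i : Fin n,
        ((∑ j : Fin n, ∑ k : Fin n,
          (if i = j ∨ i = k ∨ j = k then 0
            else (2 * lam i / (lam i ^ 2 - lam j ^ 2)) * (2 * lam i / (lam i ^ 2 - lam k ^ 2))))
          + ∑ j ∈ Finset.univ.erase i, (2 / (lam i ^ 2 - lam j ^ 2)
              + 2 / (lam i ^ 2 - lam j ^ 2))) := by
        refine Finset.sum_congr rfl fun i _ => ?_
        rw [eR i, ← eT i, Finset.sum_add_distrib]
        ring
    _ = 0 := by
        rw [Finset.sum_add_distrib, eTriple, ePair]
        ring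

lemma claimB (hmu : ∀ i j : Fin n, i ≠ j → lam i ^ 2 ≠ lam j ^ 2) (fi : Fin n → ℝ) :
    2 * ∑ i : Fin n,
        (∑ j ∈ Finset.univ.erase i, 2 * lam i / (lam i ^ 2 - lam j ^ 2)) * fi i
      = 2 * (∑ i : Fin n, ∑ j : Fin n, if i < j then
            (1 / (lam i - lam j)) * (fi i - fi j) else 0)
        + 2 * (∑ i : Fin n, ∑ j : Fin n, if i < j then
            (1 / (lam i + lam j)) * (fi i + fi j) else 0) := by
  have hsubne : ∀ i j : Fin n, i ≠ j → lam i - lam j ≠ 0 := by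
    intro i j hij hc
    exact hmu i j hij (by rw [sub_eq_zero] at hc; rw [hc])
  have haddne : ∀ i j : Fin n, i ≠ j → lam i + lam j ≠ 0 := by
    intro i j hij hc
    have : lam i = -lam j := by linarith [hc]
    exact hmu i j hij (by rw [this]; ring)
  have split : ∀ i : Fin n,
      (∑ j ∈ Finset.univ.erase i, 2 * lam i / (lam i ^ 2 - lam j ^ 2)) * fi i
      = (∑ j : Fin n, (if i = j then 0 else fi i / (lam i - lam j)))
        + (∑ j : Fin n, (if i = j then 0 else fi i / (lam i + lam j))) := by
    intro i
    rw [Finset.sum_mul, sum_erase_eq_sum_ite, ← Finset.sum_add_distrib]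
    refine Finset.sum_congr rfl fun j _ => ?_
    by_cases hij : j = i
    · simp [hij]
    · rw [if_neg hij, if_neg (fun h => hij h.symm), if_neg (fun h => hij h.symm)]
      have d1 : lam i - lam j ≠ 0 := hsubne i j (fun h => hij h.symm)
      have d2 : lam i + lam j ≠ 0 := haddne i j (fun h => hij h.symm)
      have d3 : lam i ^ 2 - lam j ^ 2 ≠ 0 := sub_ne_zero.2 (hmu i j (fun h => hij h.symm))
      field_simp
      ring
  rw [Finset.sum_congr rfl fun i _ => split i, Finset.sum_add_distrib]
  have part1 : ∑ i : Fin n, ∑ j : Fin n, (if i = j then 0 else fi i / (lam i - lam j))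
      = ∑ i : Fin n, ∑ j : Fin n, (if i < j then (1 / (lam i - lam j)) * (fi i - fi j) else 0) := by
    rw [sum_pairs_split _ (fun i => by simp)]
    refine Finset.sum_congr rfl fun i _ => Finset.sum_congr rfl fun j _ => ?_
    by_cases hij : i < j
    · rw [if_pos hij, if_pos hij]
      have hne' : i ≠ j := ne_of_lt hij
      rw [if_neg hne', if_neg (Ne.symm hne')]
      have d1 : lam i - lam j ≠ 0 := hsubne i j hne'
      have d2 : lam j - lam i ≠ 0 := hsubne j i (Ne.symm hne')
      field_simp
      ring
    · rw [if_neg hij, if_neg hij]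
  have part2 : ∑ i : Fin n, ∑ j : Fin n, (if i = j then 0 else fi i / (lam i + lam j))
      = ∑ i : Fin n, ∑ j : Fin n, (if i < j then (1 / (lam i + lam j)) * (fi i + fi j) else 0) := by
    rw [sum_pairs_split _ (fun i => by simp)]
    refine Finset.sum_congr rfl fun i _ => Finset.sum_congr rfl fun j _ => ?_
    by_cases hij : i < j
    · rw [if_pos hij, if_pos hij]
      have hne' : i ≠ j := ne_of_lt hij
      rw [if_neg hne', if_neg (Ne.symm hne')]
      have d2 : lam i + lam j ≠ 0 := haddne i j hne'
      have d3 : lam j + lam i ≠ 0 := haddne j i (Ne.symm hne')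
      field_simp
      ring
    · rw [if_neg hij, if_neg hij]
  rw [part1, part2]
  ring

end



set_option maxHeartbeats 1000000 in
/-- For `F : ℝⁿ → ℝ` of class `C²` on an open set, with
`D(λ) = ∏_{i<j} (λᵢ² − λⱼ²)`, at every point of the open set where all `λᵢ ≠ 0` and `D(λ) ≠ 0`:
`(1/D) Σᵢ (∂²/∂λᵢ² + (1/λᵢ)∂/∂λᵢ)(D·F)
  = Σᵢ (∂²F/∂λᵢ² + (1/λᵢ)∂F/∂λᵢ) + 2Σ_{i<j} (1/(λᵢ−λⱼ))(∂F/∂λᵢ−∂F/∂λⱼ)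
    + 2Σ_{i<j} (1/(λᵢ+λⱼ))(∂F/∂λᵢ+∂F/∂λⱼ)`. -/
theorem radial_operator_rewrite
    (n : ℕ) (hn : 1 ≤ n) (s : Set (Fin n → ℝ)) (hs : IsOpen s)
    (F : (Fin n → ℝ) → ℝ) (hF : ContDiffOn ℝ 2 F s)
    (D : (Fin n → ℝ) → ℝ)
    (hD : D = fun lam => ∏ i : Fin n, ∏ j : Fin n,
      if i < j then (lam i) ^ 2 - (lam j) ^ 2 else 1)
    (lam : Fin n → ℝ) (hlam : lam ∈ s) (hne : ∀ i, lam i ≠ 0) (hDne : D lam ≠ 0) :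
    (1 / D lam) *
        (∑ i : Fin n,
          (fderiv ℝ (fderiv ℝ (fun x => D x * F x)) lam (Pi.single i 1) (Pi.single i 1)
            + (1 / lam i) * fderiv ℝ (fun x => D x * F x) lam (Pi.single i 1)))
      = (∑ i : Fin n,
            (fderiv ℝ (fderiv ℝ F) lam (Pi.single i 1) (Pi.single i 1)
              + (1 / lam i) * fderiv ℝ F lam (Pi.single i 1)))
        + 2 * (∑ i : Fin n, ∑ j : Fin n, if i < j then
            (1 / (lam i - lam j)) *
              (fderiv ℝ F lam (Pi.single i 1) - fderiv ℝ F lam (Pi.single j 1)) else 0)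
        + 2 * (∑ i : Fin n, ∑ j : Fin n, if i < j then
            (1 / (lam i + lam j)) *
              (fderiv ℝ F lam (Pi.single i 1) + fderiv ℝ F lam (Pi.single j 1)) else 0) := by

  classical
  -- rewrite D as a product over the pair set
  have hDK : D = fun y => ∏ p ∈ Kp n, fpair p y := by
    rw [hD]
    funext y
    have : ∏ p ∈ Kp n, fpair p y
        = ∏ i : Fin n, ∏ j : Fin n, if i < j then (y i) ^ 2 - (y j) ^ 2 else 1 := by
      rw [show Kp n = Finset.univ.filter (fun p : Fin n × Fin n => p.1 < p.2) from rfl,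
        Finset.prod_filter, ← Finset.univ_product_univ, Finset.prod_product]
      rfl
    exact this.symm
  have hfne : ∀ p ∈ Kp n, fpair p lam ≠ 0 := by
    intro p hp hzero
    apply hDne
    rw [hDK]
    exact Finset.prod_eq_zero hp hzero
  have hmu : ∀ i j : Fin n, i ≠ j → lam i ^ 2 ≠ lam j ^ 2 := fun i j hij => mu_ne hfne hij
  set P : ℝ := ∏ p ∈ Kp n, fpair p lam with hPdef
  have hDlam : D lam = P := by rw [hDK]
  have hPne : P ≠ 0 := by rw [← hDlam]; exact hDne
  -- abbreviations for the scalar sums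
  set Sv : Fin n → ℝ :=
    fun i => ∑ j ∈ Finset.univ.erase i, 2 * lam i / (lam i ^ 2 - lam j ^ 2) with hSv
  set Qv : Fin n → ℝ :=
    fun i => ∑ j ∈ Finset.univ.erase i, (2 * lam i / (lam i ^ 2 - lam j ^ 2)) ^ 2 with hQv
  set Rv : Fin n → ℝ :=
    fun i => ∑ j ∈ Finset.univ.erase i, 2 / (lam i ^ 2 - lam j ^ 2) with hRv
  -- smoothness facts
  have hDct : ContDiff ℝ 2 D := by
    rw [hDK]; exact contDiff_prod fun p _ => contDiff_fpair p
  have hDdiff : Differentiable ℝ D := hDct.differentiable (by norm_num)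
  have hGc : ContDiffOn ℝ 2 (fun x => D x * F x) s := (hDct.contDiffOn).mul hF
  have hFd1 : ∀ x ∈ s, DifferentiableAt ℝ F x := fun x hx =>
    ((hF.differentiableOn (by norm_num)) x hx).differentiableAt (hs.mem_nhds hx)
  have hfF1 : ContDiffOn ℝ 1 (fun x => fderiv ℝ F x) s := hF.fderiv_of_isOpen hs (by norm_num)
  have hFd2 : DifferentiableAt ℝ (fderiv ℝ F) lam :=
    ((hfF1.differentiableOn (by norm_num)) lam hlam).differentiableAt (hs.mem_nhds hlam)
  have hfG1 : ContDiffOn ℝ 1 (fun x => fderiv ℝ (fun x => D x * F x) x) s :=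
    hGc.fderiv_of_isOpen hs (by norm_num)
  have hGd2 : DifferentiableAt ℝ (fderiv ℝ (fun x => D x * F x)) lam :=
    ((hfG1.differentiableOn (by norm_num)) lam hlam).differentiableAt (hs.mem_nhds hlam)
  -- the derivative of D
  have hDfd : ∀ x, HasFDerivAt D (∑ p ∈ Kp n, (∏ q ∈ (Kp n).erase p, fpair q x) • Lmap p x) x := by
    intro x
    rw [hDK]
    exact hasFDerivAt_prodK x
  have hfderivD : ∀ x, fderiv ℝ D x
      = ∑ p ∈ Kp n, (∏ q ∈ (Kp n).erase p, fpair q x) • Lmap p x := fun x => (hDfd x).fderiv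
  -- first derivative of D·F on s
  have hGfd : ∀ x ∈ s, fderiv ℝ (fun x => D x * F x) x
      = D x • fderiv ℝ F x + F x • fderiv ℝ D x :=
    fun x hx => fderiv_mul (hDdiff x) (hFd1 x hx)
  have key1 : ∀ i : Fin n, fderiv ℝ (fun x => D x * F x) lam (Pi.single i 1)
      = D lam * fderiv ℝ F lam (Pi.single i 1) + F lam * (P * Sv i) := by
    intro i
    rw [hGfd lam hlam]
    rw [ContinuousLinearMap.add_apply, ContinuousLinearMap.smul_apply,
      ContinuousLinearMap.smul_apply, smul_eq_mul, smul_eq_mul, hfderivD lam,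
      Dd_apply hfne i]
  -- second derivative of D·F in direction i
  have key2 : ∀ i : Fin n,
      fderiv ℝ (fderiv ℝ (fun x => D x * F x)) lam (Pi.single i 1) (Pi.single i 1)
      = F lam * (P * (Sv i * Sv i - Qv i + Rv i))
        + (P * Sv i) * fderiv ℝ F lam (Pi.single i 1)
        + D lam * fderiv ℝ (fderiv ℝ F) lam (Pi.single i 1) (Pi.single i 1)
        + fderiv ℝ F lam (Pi.single i 1) * (P * Sv i) := by
    intro i
    have hpsi := hasFDerivAt_psi (n := n) i lam
    -- step 1 : move the application inside
    have step1 : fderiv ℝ (fderiv ℝ (fun x => D x * F x)) lam (Pi.single i 1) (Pi.single i 1)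
        = fderiv ℝ (fun x => fderiv ℝ (fun x => D x * F x) x (Pi.single i 1)) lam
            (Pi.single i 1) := by
      rw [fderiv_clm_apply hGd2 (differentiableAt_const (Pi.single i 1))]
      simp
    rw [step1]
    -- step 2 : the function agrees near lam with an explicit one
    have hev : (fun x => fderiv ℝ (fun x => D x * F x) x (Pi.single i 1))
        =ᶠ[nhds lam] (fun x =>
          F x * (∑ p ∈ Kp n, (∏ q ∈ (Kp n).erase p, fpair q x) * lfun i p x)
          + D x * fderiv ℝ F x (Pi.single i 1)) := by
      filter_upwards [hs.mem_nhds hlam] with x hx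
      rw [hGfd x hx]
      rw [ContinuousLinearMap.add_apply, ContinuousLinearMap.smul_apply,
        ContinuousLinearMap.smul_apply, smul_eq_mul, smul_eq_mul, hfderivD x,
        ContinuousLinearMap.sum_apply]
      have e1 : ∀ p ∈ Kp n, ((∏ q ∈ (Kp n).erase p, fpair q x) • Lmap p x) (Pi.single i 1)
          = (∏ q ∈ (Kp n).erase p, fpair q x) * lfun i p x := by
        intro p hp
        rw [ContinuousLinearMap.smul_apply, Lmap_apply_single, smul_eq_mul]
      rw [Finset.sum_congr rfl e1]
      ring
    rw [hev.fderiv_eq]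
    -- step 3 : differentiate the explicit function
    have hψd : DifferentiableAt ℝ
        (fun x => ∑ p ∈ Kp n, (∏ q ∈ (Kp n).erase p, fpair q x) * lfun i p x) lam :=
      hpsi.differentiableAt
    have hφd : DifferentiableAt ℝ (fun x => fderiv ℝ F x (Pi.single i 1)) lam :=
      hFd2.clm_apply (differentiableAt_const _)
    have hadd : fderiv ℝ (fun x =>
          F x * (∑ p ∈ Kp n, (∏ q ∈ (Kp n).erase p, fpair q x) * lfun i p x)
          + D x * fderiv ℝ F x (Pi.single i 1)) lam
        = fderiv ℝ (fun x =>
            F x * (∑ p ∈ Kp n, (∏ q ∈ (Kp n).erase p, fpair q x) * lfun i p x)) lam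
          + fderiv ℝ (fun x => D x * fderiv ℝ F x (Pi.single i 1)) lam :=
      fderiv_add ((hFd1 lam hlam).mul hψd) ((hDdiff lam).mul hφd)
    rw [hadd]
    have hmul1 : fderiv ℝ (fun x =>
          F x * (∑ p ∈ Kp n, (∏ q ∈ (Kp n).erase p, fpair q x) * lfun i p x)) lam
        = F lam • fderiv ℝ
            (fun x => ∑ p ∈ Kp n, (∏ q ∈ (Kp n).erase p, fpair q x) * lfun i p x) lam
          + (∑ p ∈ Kp n, (∏ q ∈ (Kp n).erase p, fpair q lam) * lfun i p lam) •
              fderiv ℝ F lam :=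
      fderiv_mul (hFd1 lam hlam) hψd
    have hmul2 : fderiv ℝ (fun x => D x * fderiv ℝ F x (Pi.single i 1)) lam
        = D lam • fderiv ℝ (fun x => fderiv ℝ F x (Pi.single i 1)) lam
          + fderiv ℝ F lam (Pi.single i 1) • fderiv ℝ D lam :=
      fderiv_mul (hDdiff lam) hφd
    rw [ContinuousLinearMap.add_apply, hmul1, hmul2]
    rw [ContinuousLinearMap.add_apply, ContinuousLinearMap.add_apply,
      ContinuousLinearMap.smul_apply, ContinuousLinearMap.smul_apply,
      ContinuousLinearMap.smul_apply, ContinuousLinearMap.smul_apply,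
      smul_eq_mul, smul_eq_mul, smul_eq_mul, smul_eq_mul]
    -- identify each piece
    have hψval : (∑ p ∈ Kp n, (∏ q ∈ (Kp n).erase p, fpair q lam) * lfun i p lam)
        = P * Sv i := by
      have := Dd_apply hfne i
      rw [ContinuousLinearMap.sum_apply] at this
      have e1 : ∀ p ∈ Kp n, ((∏ q ∈ (Kp n).erase p, fpair q lam) • Lmap p lam) (Pi.single i 1)
          = (∏ q ∈ (Kp n).erase p, fpair q lam) * lfun i p lam := by
        intro p hp
        rw [ContinuousLinearMap.smul_apply, Lmap_apply_single, smul_eq_mul]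
      rw [Finset.sum_congr rfl e1] at this
      exact this
    have hψder : fderiv ℝ
        (fun x => ∑ p ∈ Kp n, (∏ q ∈ (Kp n).erase p, fpair q x) * lfun i p x) lam
          (Pi.single i 1)
        = P * (Sv i * Sv i - Qv i + Rv i) := by
      rw [hpsi.fderiv]
      exact Psi_apply hfne i
    have hφder : fderiv ℝ (fun x => fderiv ℝ F x (Pi.single i 1)) lam (Pi.single i 1)
        = fderiv ℝ (fderiv ℝ F) lam (Pi.single i 1) (Pi.single i 1) := by
      rw [fderiv_clm_apply hFd2 (differentiableAt_const (Pi.single i 1))]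
      simp
    rw [hψval, hψder, hφder, hfderivD lam, Dd_apply hfne i]
    rw [show (∑ j ∈ Finset.univ.erase i, 2 * lam i / (lam i ^ 2 - lam j ^ 2)) = Sv i from rfl,
      show (∏ p ∈ Kp n, fpair p lam) = P from rfl]
    ring
  -- assemble
  have keysum : ∀ i ∈ (Finset.univ : Finset (Fin n)),
      fderiv ℝ (fderiv ℝ (fun x => D x * F x)) lam (Pi.single i 1) (Pi.single i 1)
        + (1 / lam i) * fderiv ℝ (fun x => D x * F x) lam (Pi.single i 1)
      = P * ((fderiv ℝ (fderiv ℝ F) lam (Pi.single i 1) (Pi.single i 1)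
            + (1 / lam i) * fderiv ℝ F lam (Pi.single i 1))
          + 2 * (Sv i * fderiv ℝ F lam (Pi.single i 1))
          + F lam * (Sv i * Sv i - Qv i + Rv i + (1 / lam i) * Sv i)) := by
    intro i _
    rw [key2 i, key1 i, hDlam]
    ring
  rw [Finset.sum_congr rfl keysum, ← Finset.mul_sum, hDlam, ← mul_assoc,
    one_div_mul_cancel hPne, one_mul]
  have expand : ∑ i : Fin n,
      ((fderiv ℝ (fderiv ℝ F) lam (Pi.single i 1) (Pi.single i 1)
            + (1 / lam i) * fderiv ℝ F lam (Pi.single i 1))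
          + 2 * (Sv i * fderiv ℝ F lam (Pi.single i 1))
          + F lam * (Sv i * Sv i - Qv i + Rv i + (1 / lam i) * Sv i))
      = (∑ i : Fin n, (fderiv ℝ (fderiv ℝ F) lam (Pi.single i 1) (Pi.single i 1)
            + (1 / lam i) * fderiv ℝ F lam (Pi.single i 1)))
        + 2 * (∑ i : Fin n, Sv i * fderiv ℝ F lam (Pi.single i 1))
        + F lam * (∑ i : Fin n, (Sv i * Sv i - Qv i + Rv i + (1 / lam i) * Sv i)) := by
    rw [Finset.sum_add_distrib, Finset.sum_add_distrib, ← Finset.mul_sum, ← Finset.mul_sum]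
  rw [expand]
  have hA : ∑ i : Fin n, (Sv i * Sv i - Qv i + Rv i + (1 / lam i) * Sv i) = 0 :=
    claimA hmu hne
  have hB : 2 * ∑ i : Fin n, Sv i * fderiv ℝ F lam (Pi.single i 1)
      = 2 * (∑ i : Fin n, ∑ j : Fin n, if i < j then
            (1 / (lam i - lam j)) *
              (fderiv ℝ F lam (Pi.single i 1) - fderiv ℝ F lam (Pi.single j 1)) else 0)
        + 2 * (∑ i : Fin n, ∑ j : Fin n, if i < j then
            (1 / (lam i + lam j)) *
              (fderiv ℝ F lam (Pi.single i 1) + fderiv ℝ F lam (Pi.single j 1)) else 0) :=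
    claimB hmu (fun i => fderiv ℝ F lam (Pi.single i 1))
  rw [hA, hB]
  ring
end

section
/- Let X be a compact Hausdorff topological space and μ a finite positive Borel measure on X such that μ(B) > 0 for every nonempty open set B ⊆ X. Let δ : X → ℝ be a continuous positive function that attains its maximum at a unique point x₀, i.e. δ(x) < δ(x₀) for every x ≠ x₀. For each n set 1/cₙ = ∫_X δ(x)ⁿ μ(dx). Then for every continuous function f : X × X → ℝ, lim_{n→∞} cₙ² ∫_{X×X} f(x,y) δ(x)ⁿ δ(y)ⁿ μ(dx) μ(dy) = f(x₀, x₀). -/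
open MeasureTheory Filter

private lemma laplace_aux_calc (t β C T m M : ℝ) (n : ℕ) (ht : t ≠ 0) (hβ : β ≠ 0) :
    1 / (t ^ n * β) ^ 2 * (2 * C * (m * M) ^ n * T)
      = 2 * C * T / (β * β) * (m * M / (t * t)) ^ n := by
  rw [div_pow]
  field_simp
  ring

set_option maxHeartbeats 1600000 in
/-- Let `X` be a compact Hausdorff space, `μ` a finite Borel measure giving
positive mass to every nonempty open set, `δ : X → ℝ` a continuous positive function attaining
its maximum at a unique point `x₀`, and `1/cₙ = ∫ δⁿ dμ`. Then for every continuous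
`f : X × X → ℝ`,
`lim_{n→∞} cₙ² ∫_{X×X} f(x,y) δ(x)ⁿ δ(y)ⁿ μ(dx)μ(dy) = f(x₀,x₀)`. -/
theorem laplace_method_product_limit
    (X : Type*) [TopologicalSpace X] [CompactSpace X] [T2Space X]
    [MeasurableSpace X] [BorelSpace X]
    (μ : Measure X) [IsFiniteMeasure μ]
    (hμ : ∀ B : Set X, IsOpen B → B.Nonempty → 0 < μ B)
    (δ : X → ℝ) (hδc : Continuous δ) (hδpos : ∀ x, 0 < δ x)
    (x₀ : X) (hmax : ∀ x, x ≠ x₀ → δ x < δ x₀)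
    (c : ℕ → ℝ) (hc : ∀ n : ℕ, 1 / c n = ∫ x, δ x ^ n ∂μ)
    (f : X × X → ℝ) (hf : Continuous f) :
    Tendsto (fun n : ℕ =>
        (c n) ^ 2 * ∫ p : X × X, f p * δ p.1 ^ n * δ p.2 ^ n ∂(μ.prod μ))
      atTop (nhds (f (x₀, x₀))) := by
  have hXne : Nonempty X := ⟨x₀⟩
  set M := δ x₀ with hM
  set F₀ := f (x₀, x₀) with hF₀
  set a : ℕ → ℝ := fun n => ∫ x, δ x ^ n ∂μ with ha
  have hintδ : ∀ n, Integrable (fun x => δ x ^ n) μ := fun n =>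
    (hδc.pow n).integrable_of_hasCompactSupport (HasCompactSupport.of_compactSpace _)
  have hδnn : ∀ n x, (0:ℝ) ≤ δ x ^ n := fun n x => pow_nonneg (hδpos x).le n
  have hδle : ∀ x, δ x ≤ M := by
    intro x
    by_cases h : x = x₀
    · rw [h]
    · exact (hmax x h).le
  have hMpos : 0 < M := hδpos x₀
  -- integrability of continuous functions on the product (no second countability!)
  have hintProd : ∀ g : X × X → ℝ, Continuous g → Integrable g (μ.prod μ) := by
    intro g hg
    have hsm : StronglyMeasurable g :=
      HasCompactSupport.stronglyMeasurable_of_prod hg (HasCompactSupport.of_compactSpace g)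
    obtain ⟨zg, -, hzg⟩ := isCompact_univ.exists_isMaxOn Set.univ_nonempty
      (continuous_abs.comp hg).continuousOn
    exact ⟨hsm.aestronglyMeasurable,
      HasFiniteIntegral.of_bounded (C := |g zg|)
        (Filter.Eventually.of_forall fun p => hzg (Set.mem_univ p))⟩
  -- μ of any nonempty open set has positive toReal
  have hμpos : ∀ B : Set X, IsOpen B → B.Nonempty → 0 < (μ B).toReal := by
    intro B hB hBne
    exact ENNReal.toReal_pos (hμ B hB hBne).ne' (measure_ne_top μ B)
  -- lower bound on a n over any open set where δ ≥ t
  have hlow : ∀ (V : Set X), IsOpen V → ∀ (t : ℝ), 0 ≤ t → (∀ x ∈ V, t ≤ δ x) →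
      ∀ n, t ^ n * (μ V).toReal ≤ a n := by
    intro V hV t ht htV n
    have h1 : t ^ n * (μ V).toReal ≤ ∫ x in V, δ x ^ n ∂μ := by
      have := setIntegral_ge_of_const_le hV.measurableSet (measure_ne_top μ V)
        (fun x hx => pow_le_pow_left₀ ht (htV x hx) n) (hintδ n).integrableOn
      rw [smul_eq_mul, mul_comm] at this; exact this
    have h2 : ∫ x in V, δ x ^ n ∂μ ≤ a n :=
      setIntegral_le_integral (hintδ n) (Filter.Eventually.of_forall fun x => hδnn n x)
    linarith
  have hapos : ∀ n, 0 < a n := by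
    intro n
    obtain ⟨z, -, hz⟩ := isCompact_univ.exists_isMinOn Set.univ_nonempty hδc.continuousOn
    have h1 := hlow Set.univ isOpen_univ (δ z) (hδpos z).le
      (fun x _ => hz (Set.mem_univ x)) n
    have h2 : 0 < (δ z) ^ n * (μ Set.univ).toReal := by
      have := hμpos Set.univ isOpen_univ Set.univ_nonempty
      have := hδpos z
      positivity
    linarith
  have hcn : ∀ n, c n = 1 / a n := by
    intro n
    have h := hc n
    have hcne : c n ≠ 0 := by
      intro h0
      rw [h0] at h
      simp at h
      exact (hapos n).ne' h.symm
    rw [eq_div_iff (hapos n).ne']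
    field_simp [hcne] at h
    linarith
  have hc2 : ∀ n, c n ^ 2 * (a n * a n) = 1 := by
    intro n
    have han := hapos n
    rw [hcn n, div_pow, one_pow, sq]
    field_simp
  -- integrability on the product
  have hi1 : ∀ n, Integrable (fun p : X × X => f p * δ p.1 ^ n * δ p.2 ^ n) (μ.prod μ) :=
    fun n => hintProd _ ((hf.mul ((hδc.comp continuous_fst).pow n)).mul
      ((hδc.comp continuous_snd).pow n))
  have hi2 : ∀ n, Integrable (fun p : X × X => δ p.1 ^ n * δ p.2 ^ n) (μ.prod μ) :=
    fun n => hintProd _ (((hδc.comp continuous_fst).pow n).mul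
      ((hδc.comp continuous_snd).pow n))
  have hig : ∀ n, Integrable
      (fun p : X × X => (f p - F₀) * (δ p.1 ^ n * δ p.2 ^ n)) (μ.prod μ) :=
    fun n => hintProd _ ((hf.sub continuous_const).mul
      (((hδc.comp continuous_fst).pow n).mul ((hδc.comp continuous_snd).pow n)))
  have higa : ∀ n, Integrable
      (fun p : X × X => |f p - F₀| * (δ p.1 ^ n * δ p.2 ^ n)) (μ.prod μ) :=
    fun n => hintProd _ ((hf.sub continuous_const).abs.mul
      (((hδc.comp continuous_fst).pow n).mul ((hδc.comp continuous_snd).pow n)))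
  have hprodint : ∀ n, ∫ p : X × X, δ p.1 ^ n * δ p.2 ^ n ∂(μ.prod μ) = a n * a n := by
    intro n
    exact integral_prod_mul (fun x => δ x ^ n) (fun y => δ y ^ n)
  -- key rewriting of the difference
  have key : ∀ n, c n ^ 2 * (∫ p : X × X, f p * δ p.1 ^ n * δ p.2 ^ n ∂(μ.prod μ)) - F₀
      = c n ^ 2 * ∫ p : X × X, (f p - F₀) * (δ p.1 ^ n * δ p.2 ^ n) ∂(μ.prod μ) := by
    intro n
    have e1 : ∫ p : X × X, (f p - F₀) * (δ p.1 ^ n * δ p.2 ^ n) ∂(μ.prod μ)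
        = (∫ p : X × X, f p * δ p.1 ^ n * δ p.2 ^ n ∂(μ.prod μ)) - F₀ * (a n * a n) := by
      have heq : (fun p : X × X => (f p - F₀) * (δ p.1 ^ n * δ p.2 ^ n))
          = fun p : X × X => f p * δ p.1 ^ n * δ p.2 ^ n
            - F₀ * (δ p.1 ^ n * δ p.2 ^ n) := by
        funext p; ring
      rw [heq, integral_sub (hi1 n) ((hi2 n).const_mul _), integral_const_mul, hprodint n]
    rw [e1, mul_sub]
    linear_combination F₀ * hc2 n
  -- main estimate via metric convergence
  rw [Metric.tendsto_atTop]
  intro ε hε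
  -- bound C on |f|
  obtain ⟨zf, -, hzf⟩ := isCompact_univ.exists_isMaxOn Set.univ_nonempty
    (continuous_abs.comp hf).continuousOn
  set C := |f zf| with hCdef
  have hC : ∀ p : X × X, |f p| ≤ C := fun p => hzf (Set.mem_univ p)
  have hCnn : 0 ≤ C := (abs_nonneg _).trans (hC (x₀, x₀))
  -- neighborhood U of x₀ where f is within ε/2 of F₀ on U × U
  have hW : IsOpen (f ⁻¹' Metric.ball F₀ (ε / 2)) := hf.isOpen_preimage _ Metric.isOpen_ball
  have hx0W : (x₀, x₀) ∈ f ⁻¹' Metric.ball F₀ (ε / 2) := by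
    simp only [Set.mem_preimage, Metric.mem_ball, dist_self, ← hF₀]
    positivity
  obtain ⟨u, hu, v, hv, huv⟩ := mem_nhds_prod_iff.mp (hW.mem_nhds hx0W)
  obtain ⟨U, hUuv, hUopen, hx0U⟩ := mem_nhds_iff.mp (Filter.inter_mem hu hv)
  have hUf : ∀ p : X × X, p.1 ∈ U → p.2 ∈ U → |f p - F₀| < ε / 2 := by
    intro p h1 h2
    have hm : p ∈ u ×ˢ v := ⟨(hUuv h1).1, (hUuv h2).2⟩
    have := huv hm
    simpa [Metric.mem_ball, Real.dist_eq] using this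
  -- distance as an integral bound
  have hdist : ∀ n, dist (c n ^ 2 * ∫ p : X × X, f p * δ p.1 ^ n * δ p.2 ^ n ∂(μ.prod μ)) F₀
      ≤ c n ^ 2 * ∫ p : X × X, |f p - F₀| * (δ p.1 ^ n * δ p.2 ^ n) ∂(μ.prod μ) := by
    intro n
    rw [Real.dist_eq, key n, abs_mul, abs_of_nonneg (sq_nonneg (c n))]
    gcongr
    calc |∫ p : X × X, (f p - F₀) * (δ p.1 ^ n * δ p.2 ^ n) ∂(μ.prod μ)|
        = ‖∫ p : X × X, (f p - F₀) * (δ p.1 ^ n * δ p.2 ^ n) ∂(μ.prod μ)‖ :=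
          (Real.norm_eq_abs _).symm
      _ ≤ ∫ p : X × X, ‖(f p - F₀) * (δ p.1 ^ n * δ p.2 ^ n)‖ ∂(μ.prod μ) :=
          norm_integral_le_integral_norm _
      _ = ∫ p : X × X, |f p - F₀| * (δ p.1 ^ n * δ p.2 ^ n) ∂(μ.prod μ) := by
          congr 1; funext p
          rw [Real.norm_eq_abs, abs_mul, abs_of_nonneg (mul_nonneg (hδnn n p.1) (hδnn n p.2))]
  by_cases hKne : (Uᶜ : Set X).Nonempty
  · -- nontrivial case: Uᶜ nonempty
    obtain ⟨y, hyK, hymax⟩ := (isCompact_univ.of_isClosed_subset hUopen.isClosed_compl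
      (Set.subset_univ _)).exists_isMaxOn hKne hδc.continuousOn
    set m := δ y with hm
    have hmM : m < M := hmax y (fun h => hyK (h ▸ hx0U))
    have hmpos : 0 < m := hδpos y
    set t := (m + M) / 2 with ht
    have htm : m < t := by rw [ht]; linarith
    have htM : t < M := by rw [ht]; linarith
    have htpos : 0 < t := by linarith
    set V := {x | t < δ x} with hV
    have hVopen : IsOpen V := isOpen_lt continuous_const hδc
    have hx0V : x₀ ∈ V := htM
    set β := (μ V).toReal with hβ
    have hβpos : 0 < β := hμpos V hVopen ⟨x₀, hx0V⟩
    have halow : ∀ n, t ^ n * β ≤ a n := fun n =>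
      hlow V hVopen t htpos.le (fun x hx => le_of_lt hx) n
    set T := ((μ.prod μ) Set.univ).toReal with hT
    have hTnn : 0 ≤ T := ENNReal.toReal_nonneg
    set r := m * M / (t * t) with hr
    have hrnn : 0 ≤ r := by positivity
    have hr1 : r < 1 := by
      rw [hr, div_lt_one (by positivity)]
      nlinarith
    set D := 2 * C * T / (β * β) with hD
    have hDnn : 0 ≤ D := by positivity
    -- eventual smallness of D * r^n
    have hten : Tendsto (fun n : ℕ => D * r ^ n) atTop (nhds 0) := by
      have h0 := tendsto_pow_atTop_nhds_zero_of_lt_one hrnn hr1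
      simpa using h0.const_mul D
    have hev : ∀ᶠ n in atTop, D * r ^ n < ε / 2 :=
      hten.eventually (gt_mem_nhds (by positivity))
    obtain ⟨N, hN⟩ := hev.exists_forall_of_atTop
    refine ⟨N, fun n hn => ?_⟩
    -- pointwise bound
    have hpoint : ∀ p : X × X, |f p - F₀| * (δ p.1 ^ n * δ p.2 ^ n)
        ≤ ε / 2 * (δ p.1 ^ n * δ p.2 ^ n) + 2 * C * (m * M) ^ n := by
      intro p
      have hprod_nn : 0 ≤ δ p.1 ^ n * δ p.2 ^ n := mul_nonneg (hδnn n p.1) (hδnn n p.2)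
      by_cases hp : p.1 ∈ U ∧ p.2 ∈ U
      · have h1 := (hUf p hp.1 hp.2).le
        have h2 : 0 ≤ 2 * C * (m * M) ^ n := by positivity
        nlinarith [mul_le_mul_of_nonneg_right h1 hprod_nn]
      · have h2C : |f p - F₀| ≤ 2 * C := by
          calc |f p - F₀| ≤ |f p| + |F₀| := abs_sub _ _
            _ ≤ C + C := add_le_add (hC p) (hC (x₀, x₀))
            _ = 2 * C := by ring
        have hsmall : δ p.1 ^ n * δ p.2 ^ n ≤ (m * M) ^ n := by
          rw [mul_pow]
          rcases not_and_or.mp hp with h | h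
          · exact mul_le_mul (pow_le_pow_left₀ (hδpos _).le (hymax h) n)
              (pow_le_pow_left₀ (hδpos _).le (hδle p.2) n) (hδnn n p.2) (by positivity)
          · have e : m ^ n * M ^ n = M ^ n * m ^ n := by ring
            rw [e]
            exact mul_le_mul (pow_le_pow_left₀ (hδpos _).le (hδle p.1) n)
              (pow_le_pow_left₀ (hδpos _).le (hymax h) n) (hδnn n p.2) (by positivity)
        have h3 : 0 ≤ ε / 2 * (δ p.1 ^ n * δ p.2 ^ n) := by positivity
        nlinarith [mul_le_mul h2C hsmall hprod_nn (by positivity : (0:ℝ) ≤ 2 * C)]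
    -- integrate the bound
    have hIbound : ∫ p : X × X, |f p - F₀| * (δ p.1 ^ n * δ p.2 ^ n) ∂(μ.prod μ)
        ≤ ε / 2 * (a n * a n) + 2 * C * (m * M) ^ n * T := by
      calc ∫ p : X × X, |f p - F₀| * (δ p.1 ^ n * δ p.2 ^ n) ∂(μ.prod μ)
          ≤ ∫ p : X × X, (ε / 2 * (δ p.1 ^ n * δ p.2 ^ n) + 2 * C * (m * M) ^ n) ∂(μ.prod μ) :=
            integral_mono (higa n) (((hi2 n).const_mul _).add (integrable_const _)) hpoint
        _ = ε / 2 * (a n * a n) + 2 * C * (m * M) ^ n * T := by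
            rw [integral_add ((hi2 n).const_mul _) (integrable_const _),
              integral_const_mul, hprodint n, integral_const]
            simp only [smul_eq_mul, hT, Measure.real]
            ring
    -- combine
    have hI_nn : 0 ≤ ∫ p : X × X, |f p - F₀| * (δ p.1 ^ n * δ p.2 ^ n) ∂(μ.prod μ) :=
      integral_nonneg (fun p => mul_nonneg (abs_nonneg _)
        (mul_nonneg (hδnn n p.1) (hδnn n p.2)))
    have h1 : c n ^ 2 * ∫ p : X × X, |f p - F₀| * (δ p.1 ^ n * δ p.2 ^ n) ∂(μ.prod μ)
        ≤ c n ^ 2 * (ε / 2 * (a n * a n) + 2 * C * (m * M) ^ n * T) :=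
      mul_le_mul_of_nonneg_left hIbound (sq_nonneg _)
    have h2 : c n ^ 2 * (ε / 2 * (a n * a n)) = ε / 2 := by
      linear_combination (ε / 2) * hc2 n
    have htne : (t : ℝ) ≠ 0 := htpos.ne'
    have hβne : β ≠ 0 := hβpos.ne'
    have h3 : c n ^ 2 * (2 * C * (m * M) ^ n * T) ≤ D * r ^ n := by
      have h0 : (0:ℝ) < t ^ n * β := by positivity
      have hc_le : c n ^ 2 ≤ 1 / (t ^ n * β) ^ 2 := by
        rw [hcn n, div_pow, one_pow]
        apply one_div_le_one_div_of_le (by positivity)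
        exact pow_le_pow_left₀ h0.le (halow n) 2
      have hnum : (0:ℝ) ≤ 2 * C * (m * M) ^ n * T := by positivity
      calc c n ^ 2 * (2 * C * (m * M) ^ n * T)
          ≤ 1 / (t ^ n * β) ^ 2 * (2 * C * (m * M) ^ n * T) :=
            mul_le_mul_of_nonneg_right hc_le hnum
        _ = D * r ^ n := by
            rw [hD, hr]
            exact laplace_aux_calc t β C T m M n htne hβne
    calc dist (c n ^ 2 * ∫ p : X × X, f p * δ p.1 ^ n * δ p.2 ^ n ∂(μ.prod μ)) F₀
        ≤ c n ^ 2 * ∫ p : X × X, |f p - F₀| * (δ p.1 ^ n * δ p.2 ^ n) ∂(μ.prod μ) := hdist n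
      _ ≤ c n ^ 2 * (ε / 2 * (a n * a n) + 2 * C * (m * M) ^ n * T) := h1
      _ = c n ^ 2 * (ε / 2 * (a n * a n)) + c n ^ 2 * (2 * C * (m * M) ^ n * T) := by ring
      _ ≤ ε / 2 + D * r ^ n := by rw [h2]; linarith
      _ < ε / 2 + ε / 2 := by linarith [hN n hn]
      _ = ε := by ring
  · -- trivial case: U = univ
    rw [Set.not_nonempty_iff_eq_empty, Set.compl_empty_iff] at hKne
    refine ⟨0, fun n _ => ?_⟩
    have hpoint : ∀ p : X × X, |f p - F₀| * (δ p.1 ^ n * δ p.2 ^ n)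
        ≤ ε / 2 * (δ p.1 ^ n * δ p.2 ^ n) := by
      intro p
      have hprod_nn : 0 ≤ δ p.1 ^ n * δ p.2 ^ n := mul_nonneg (hδnn n p.1) (hδnn n p.2)
      have h1 : p.1 ∈ U := by rw [hKne]; exact Set.mem_univ _
      have h2 : p.2 ∈ U := by rw [hKne]; exact Set.mem_univ _
      exact mul_le_mul_of_nonneg_right (hUf p h1 h2).le hprod_nn
    have hIbound : ∫ p : X × X, |f p - F₀| * (δ p.1 ^ n * δ p.2 ^ n) ∂(μ.prod μ)
        ≤ ε / 2 * (a n * a n) := by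
      calc ∫ p : X × X, |f p - F₀| * (δ p.1 ^ n * δ p.2 ^ n) ∂(μ.prod μ)
          ≤ ∫ p : X × X, ε / 2 * (δ p.1 ^ n * δ p.2 ^ n) ∂(μ.prod μ) :=
            integral_mono (higa n) ((hi2 n).const_mul _) hpoint
        _ = ε / 2 * (a n * a n) := by rw [integral_const_mul, hprodint n]
    calc dist (c n ^ 2 * ∫ p : X × X, f p * δ p.1 ^ n * δ p.2 ^ n ∂(μ.prod μ)) F₀
        ≤ c n ^ 2 * ∫ p : X × X, |f p - F₀| * (δ p.1 ^ n * δ p.2 ^ n) ∂(μ.prod μ) := hdist n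
      _ ≤ c n ^ 2 * (ε / 2 * (a n * a n)) :=
          mul_le_mul_of_nonneg_left hIbound (sq_nonneg _)
      _ = ε / 2 := by linear_combination (ε / 2) * hc2 n
      _ < ε := by linarith
end

section
/- Let μ be a positive Borel measure on (0,∞) such that μ([a,∞)) is a natural number for every a > 0. Then there exist N ∈ ℕ ∪ {∞} and positive real numbers (α_k)_{1 ≤ k < N+1} such that μ = Σ_k δ_{α_k} (the sum of Dirac masses at the points α_k, repeated according to multiplicity); moreover, if N = ∞ then the sequence (α_k) converges to 0. -/
open MeasureTheory Filter

open scoped ENNReal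

open Set in
private theorem master (μ : Measure ↥(Set.Ioi (0:ℝ)))
    (h : ∀ a : ℝ, 0 < a → ∃ m : ℕ, μ {x : ↥(Set.Ioi (0:ℝ)) | a ≤ (x : ℝ)} = m) :
    ∃ (N : ℕ∞) (α : ℕ → ↥(Set.Ioi (0:ℝ))),
      μ = Measure.sum (fun k : {k : ℕ // (k : ℕ∞) < N} => Measure.dirac (α k.1)) ∧
      (N = ⊤ → Tendsto (fun k => ((α k : ℝ))) atTop (nhds 0)) := by
  classical
  set P := ↥(Set.Ioi (0:ℝ)) with hP
  set F : ℝ → ℝ≥0∞ := fun a => μ {x : P | a ≤ (x:ℝ)} with hFdef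
  have hmeas : ∀ a : ℝ, MeasurableSet {x : P | a ≤ (x:ℝ)} := fun a =>
    measurable_subtype_coe measurableSet_Ici
  have hanti : ∀ ⦃a b : ℝ⦄, a ≤ b → F b ≤ F a := fun a b hab =>
    measure_mono (fun x hx => le_trans hab hx)
  have hfin : ∀ a : ℝ, 0 < a → F a ≠ ⊤ := by
    intro a ha
    obtain ⟨m, hm⟩ := h a ha
    rw [show F a = (m:ℝ≥0∞) from hm]
    exact ENNReal.natCast_ne_top m
  -- infimum over a sequence of positive reals is attained
  have inf_attained : ∀ c : ℕ → ℝ, (∀ n, 0 < c n) → ∃ n0, (⨅ n, F (c n)) = F (c n0) := by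
    intro c hc
    set g : ℕ → ℕ := fun n => (h (c n) (hc n)).choose with hg
    have hgF : ∀ n, F (c n) = g n := fun n => (h (c n) (hc n)).choose_spec
    have hex : ∃ k, ∃ n, g n = k := ⟨g 0, 0, rfl⟩
    obtain ⟨n0, hn0⟩ := Nat.find_spec hex
    refine ⟨n0, le_antisymm (iInf_le _ n0) (le_iInf fun n => ?_)⟩
    rw [hgF n0, hgF n]
    exact_mod_cast hn0 ▸ Nat.find_min' hex ⟨n, rfl⟩
  -- left continuity
  have lcont : ∀ a : ℝ, 0 < a → ∃ b : ℝ, 0 < b ∧ b < a ∧ F b = F a := by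
    intro a ha
    set c : ℕ → ℝ := fun n => a - a / (n + 2) with hc
    have hcpos : ∀ n, 0 < c n := by
      intro n
      have h2 : (0:ℝ) < (n:ℝ) + 2 := by positivity
      have : a / ((n:ℝ) + 2) < a := by
        rw [div_lt_iff₀ h2]; nlinarith
      simpa [hc] using sub_pos.2 this
    have hclt : ∀ n, c n < a := by
      intro n
      have : 0 < a / ((n:ℝ) + 2) := by positivity
      simp only [hc, sub_lt_self_iff]
      exact this
    have hcmono : Monotone c := by
      intro m n hmn
      simp only [hc, sub_le_sub_iff_left]
      have hmn' : (m:ℝ) ≤ (n:ℝ) := Nat.cast_le.mpr hmn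
      apply div_le_div_of_nonneg_left (le_of_lt ha) (by positivity)
      linarith
    have hInter : (⋂ n, {x : P | c n ≤ (x:ℝ)}) = {x : P | a ≤ (x:ℝ)} := by
      ext x
      simp only [mem_iInter, mem_setOf_eq]
      constructor
      · intro hx
        by_contra hax
        push_neg at hax
        have hd : 0 < a - (x:ℝ) := by linarith
        obtain ⟨n, hn⟩ := exists_nat_gt (a / (a - (x:ℝ)))
        have h2 : (0:ℝ) < (n:ℝ) + 2 := by positivity
        have hlt : a / ((n:ℝ) + 2) < a - (x:ℝ) := by
          rw [div_lt_iff₀ h2]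
          have h3 : a / (a - (x:ℝ)) < (n:ℝ) + 2 := by linarith
          calc a = (a / (a - (x:ℝ))) * (a - (x:ℝ)) := by field_simp
            _ < ((n:ℝ) + 2) * (a - (x:ℝ)) := mul_lt_mul_of_pos_right h3 hd
            _ = (a - (x:ℝ)) * ((n:ℝ)+2) := by ring
        have := hx n
        simp only [hc] at this
        linarith
      · intro hx n
        exact le_trans (le_of_lt (hclt n)) hx
    have hdir : Directed (fun x1 x2 : Set P => x1 ⊇ x2) (fun n => {x : P | c n ≤ (x:ℝ)}) := by
      intro m n
      refine ⟨max m n, fun x hx => le_trans (hcmono (le_max_left m n)) hx,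
        fun x hx => le_trans (hcmono (le_max_right m n)) hx⟩
    have hiInf : F a = ⨅ n, F (c n) := by
      have := Directed.measure_iInter (μ := μ) (s := fun n => {x : P | c n ≤ (x:ℝ)})
        (fun n => (hmeas _).nullMeasurableSet) hdir ⟨0, hfin _ (hcpos 0)⟩
      rw [hInter] at this
      exact this
    obtain ⟨n0, hn0⟩ := inf_attained c hcpos
    exact ⟨c n0, hcpos n0, hclt n0, (hiInf.trans hn0).symm⟩
  -- there is a point where F vanishes
  have hvanish : ∃ cc : ℝ, 0 < cc ∧ F cc = 0 := by
    set c : ℕ → ℝ := fun n => (n:ℝ) + 1 with hc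
    have hcpos : ∀ n, 0 < c n := fun n => by positivity
    have hInter : (⋂ n, {x : P | c n ≤ (x:ℝ)}) = (∅ : Set P) := by
      ext x
      simp only [mem_iInter, mem_setOf_eq, mem_empty_iff_false, iff_false, not_forall]
      obtain ⟨n, hn⟩ := exists_nat_gt (x:ℝ)
      exact ⟨n, by push_neg; simp only [hc]; linarith⟩
    have hdir : Directed (fun x1 x2 : Set P => x1 ⊇ x2) (fun n => {x : P | c n ≤ (x:ℝ)}) := by
      have hcmono : Monotone c := by
        intro m n hmn
        simp only [hc, add_le_add_iff_right, Nat.cast_le]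
        exact hmn
      intro m n
      refine ⟨max m n, fun x hx => le_trans (hcmono (le_max_left m n)) hx,
        fun x hx => le_trans (hcmono (le_max_right m n)) hx⟩
    have hiInf : (0:ℝ≥0∞) = ⨅ n, F (c n) := by
      have := Directed.measure_iInter (μ := μ) (s := fun n => {x : P | c n ≤ (x:ℝ)})
        (fun n => (hmeas _).nullMeasurableSet) hdir ⟨0, hfin _ (hcpos 0)⟩
      rw [hInter, measure_empty] at this
      exact this
    obtain ⟨n0, hn0⟩ := inf_attained c hcpos
    exact ⟨c n0, hcpos n0, (hiInf.trans hn0).symm⟩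
  -- the level sets
  set S : ℕ → Set ℝ := fun k => {a : ℝ | 0 < a ∧ ((k+1 : ℕ) : ℝ≥0∞) ≤ F a} with hS
  have hSbdd : ∀ k, BddAbove (S k) := by
    intro k
    obtain ⟨cc, hccpos, hccF⟩ := hvanish
    refine ⟨cc, fun a ha => ?_⟩
    by_contra hac
    push_neg at hac
    have h1 : F a ≤ F cc := hanti (le_of_lt hac)
    rw [hccF] at h1
    have := le_trans ha.2 h1
    simp at this
  have keyiff : ∀ k : ℕ, (S k).Nonempty → ∀ a : ℝ, 0 < a →
      (a ≤ sSup (S k) ↔ ((k+1 : ℕ) : ℝ≥0∞) ≤ F a) := by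
    intro k hk a ha
    constructor
    · intro hle
      obtain ⟨b0, hb0pos, hb0lt, hb0F⟩ := lcont a ha
      obtain ⟨cc, hccS, hbcc⟩ := exists_lt_of_lt_csSup hk (lt_of_lt_of_le hb0lt hle)
      calc ((k+1 : ℕ) : ℝ≥0∞) ≤ F cc := hccS.2
        _ ≤ F b0 := hanti (le_of_lt hbcc)
        _ = F a := hb0F
    · intro hle
      exact le_csSup (hSbdd k) ⟨ha, hle⟩
  -- define N and α
  set mnat : ℕ → ℕ := fun n => (h (1/((n:ℝ)+1)) (by positivity)).choose with hmnat
  have hmnatF : ∀ n : ℕ, F (1/((n:ℝ)+1)) = mnat n := fun n =>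
    (h (1/((n:ℝ)+1)) (by positivity)).choose_spec
  set N : ℕ∞ := ⨆ n, (mnat n : ℕ∞) with hN
  have hNS : ∀ k : ℕ, ((k:ℕ∞) < N ↔ (S k).Nonempty) := by
    intro k
    rw [hN, lt_iSup_iff]
    constructor
    · rintro ⟨n, hn⟩
      have hkm : k + 1 ≤ mnat n := by exact_mod_cast hn
      refine ⟨1/((n:ℝ)+1), by positivity, ?_⟩
      rw [hmnatF n]
      exact_mod_cast hkm
    · rintro ⟨a, hapos, haF⟩
      obtain ⟨n, hn⟩ := exists_nat_gt (1/a)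
      have hna : 1/((n:ℝ)+1) ≤ a := by
        rw [div_le_iff₀ (by positivity)]
        rw [div_lt_iff₀ hapos] at hn
        nlinarith
      have : ((k+1 : ℕ) : ℝ≥0∞) ≤ F (1/((n:ℝ)+1)) := le_trans haF (hanti hna)
      rw [hmnatF n] at this
      have : k + 1 ≤ mnat n := by exact_mod_cast this
      exact ⟨n, by exact_mod_cast Nat.lt_of_lt_of_le (Nat.lt_succ_self k) this⟩
  set α : ℕ → P := fun k =>
    if hk : (S k).Nonempty then
      ⟨sSup (S k), lt_of_lt_of_le hk.choose_spec.1 (le_csSup (hSbdd k) hk.choose_spec)⟩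
    else ⟨1, by norm_num⟩ with hα
  have hαval : ∀ k, (S k).Nonempty → (α k : ℝ) = sSup (S k) := by
    intro k hk
    simp [hα, dif_pos hk]
  refine ⟨N, α, ?_, ?_⟩
  · -- measure equality
    have hgen : (Subtype.instMeasurableSpace : MeasurableSpace P)
        = MeasurableSpace.generateFrom (range (Ici : P → Set P)) :=
      (BorelSpace.measurable_eq).trans (borel_eq_generateFrom_Ici _)
    refine Measure.ext_of_generateFrom_of_iUnion (range (Ici : P → Set P))
      (fun n => Ici (⟨1/((n:ℝ)+1), by simp; positivity⟩ : P)) hgen ?_ ?_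
      (fun n => mem_range_self _) ?_ ?_
    · -- pi system
      rintro s ⟨a, rfl⟩ t ⟨b, rfl⟩ -
      rw [Ici_inter_Ici]
      exact mem_range_self _
    · -- union
      ext x
      simp only [mem_iUnion, mem_Ici, mem_univ, iff_true]
      obtain ⟨n, hn⟩ := exists_nat_gt (1/(x:ℝ))
      have hx : 0 < (x:ℝ) := x.2
      refine ⟨n, ?_⟩
      show (1/((n:ℝ)+1) : ℝ) ≤ (x:ℝ)
      rw [div_le_iff₀ (by positivity)]
      rw [div_lt_iff₀ hx] at hn
      nlinarith
    · -- finiteness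
      intro n
      exact hfin (1/((n:ℝ)+1)) (by positivity)
    · -- agreement on generators
      rintro s ⟨b, rfl⟩
      have hb : (0:ℝ) < (b:ℝ) := b.2
      obtain ⟨m, hm⟩ := h (b:ℝ) hb
      have hIci : (Ici b : Set P) = {x : P | (b:ℝ) ≤ (x:ℝ)} := by ext x; exact Iff.rfl
      rw [hIci, Measure.sum_apply _ (hmeas (b:ℝ))]
      rw [show μ {x : P | (b:ℝ) ≤ (x:ℝ)} = (m:ℝ≥0∞) from hm]
      have hFb : F (b:ℝ) = (m:ℝ≥0∞) := hm
      have hterm : ∀ k : {k : ℕ // (k:ℕ∞) < N},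
          Measure.dirac (α k.1) {x : P | (b:ℝ) ≤ (x:ℝ)} = if k.1 < m then 1 else 0 := by
        intro k
        rw [Measure.dirac_apply]
        have hk : (S k.1).Nonempty := (hNS k.1).1 k.2
        have hiff : (b:ℝ) ≤ (α k.1 : ℝ) ↔ k.1 < m := by
          rw [hαval k.1 hk, keyiff k.1 hk (b:ℝ) hb, hFb, Nat.cast_le]
          exact Nat.succ_le_iff
        by_cases hbk : k.1 < m
        · rw [if_pos hbk]
          have hmem : α k.1 ∈ {x : P | (b:ℝ) ≤ (x:ℝ)} := hiff.2 hbk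
          exact Set.indicator_of_mem hmem 1
        · rw [if_neg hbk]
          have hmem : α k.1 ∉ {x : P | (b:ℝ) ≤ (x:ℝ)} := fun hc => hbk (hiff.1 hc)
          exact Set.indicator_of_notMem hmem 1
      rw [tsum_congr hterm]
      -- ∑' k : {k // (k:ℕ∞) < N}, ite (k.1 < m) 1 0 = m
      have hsub : ∑' k : {k : ℕ // (k:ℕ∞) < N}, (if k.1 < m then (1:ℝ≥0∞) else 0)
          = ∑' k : ℕ, (if k < m then (1:ℝ≥0∞) else 0) := by
        have h1 : (∑' k : {k : ℕ // (k:ℕ∞) < N}, (if k.1 < m then (1:ℝ≥0∞) else 0))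
            = ∑' k : ℕ, Set.indicator {k : ℕ | (k:ℕ∞) < N} (fun k => if k < m then (1:ℝ≥0∞) else 0) k :=
          tsum_subtype {k : ℕ | (k:ℕ∞) < N} (fun k => if k < m then (1:ℝ≥0∞) else 0)
        rw [h1]
        apply tsum_congr
        intro k
        by_cases hk : (k:ℕ∞) < N
        · exact Set.indicator_of_mem (show k ∈ {k : ℕ | (k:ℕ∞) < N} from hk) _
        · rw [Set.indicator_of_notMem (show k ∉ {k : ℕ | (k:ℕ∞) < N} from hk), eq_comm, if_neg]
          intro hkm
          apply hk
          rw [hNS k]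
          exact ⟨(b:ℝ), hb, by rw [hFb]; exact_mod_cast hkm⟩
      rw [hsub, tsum_eq_sum (s := Finset.range m) (fun k hk => if_neg (by simpa using hk))]
      rw [Finset.sum_ite_of_true (fun k hk => Finset.mem_range.1 hk)]
      simp
  · -- tendsto
    intro hNtop
    rw [Metric.tendsto_atTop]
    intro ε hε
    obtain ⟨m, hm⟩ := h ε hε
    refine ⟨m, fun k hk => ?_⟩
    have hkN : (k:ℕ∞) < N := by rw [hNtop]; exact lt_of_le_of_ne le_top (ENat.coe_ne_top k)
    have hkS := (hNS k).1 hkN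
    have hlt : (α k : ℝ) < ε := by
      by_contra hle
      push_neg at hle
      have h1 : ((k+1:ℕ):ℝ≥0∞) ≤ F ε := by
        rw [← keyiff k hkS ε hε, ← hαval k hkS]
        exact hle
      rw [show F ε = (m:ℝ≥0∞) from hm] at h1
      have h2 : k + 1 ≤ m := by exact_mod_cast h1
      omega
    have hpos : 0 < (α k : ℝ) := (α k).2
    rw [Real.dist_eq, sub_zero, abs_of_pos hpos]
    exact hlt

/-- A positive Borel measure `μ` on `(0,∞)` such that `μ([a,∞)) ∈ ℕ` for every
`a > 0` is a (finite or countable) sum of Dirac masses at positive points `α_k`; moreover if there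
are infinitely many points, the sequence `(α_k)` tends to `0`. -/
theorem integer_valued_measure_is_sum_of_diracs
    (μ : Measure {x : ℝ // 0 < x})
    (h : ∀ a : ℝ, 0 < a → ∃ m : ℕ, μ {x : {x : ℝ // 0 < x} | a ≤ (x : ℝ)} = m) :
    ∃ (N : ℕ∞) (α : ℕ → {x : ℝ // 0 < x}),
      μ = Measure.sum (fun k : {k : ℕ // (k : ℕ∞) < N} => Measure.dirac (α k.1)) ∧
      (N = ⊤ → Tendsto (fun k => ((α k : ℝ))) atTop (nhds 0)) := by
  exact master μ h
end

section
/- Let Ω be the set of parameters ω = (α, γ) where α = (α_j)_{j≥1} is a summable sequence of nonnegative reals and γ ≥ 0, and for ω ∈ Ω let σ_ω be the finite positive measure on [0,∞) given by σ_ω = γδ₀ + Σ_{j=1}^∞ α_j δ_{α_j}. Then the family {σ_ω : ω ∈ Ω} is weakly closed in the set of finite positive measures on [0,∞): if ω⁽ⁿ⁾ = (α⁽ⁿ⁾, γ⁽ⁿ⁾) is a sequence in Ω and σ is a finite positive measure on [0,∞) such that for every bounded continuous function f on [0,∞), lim_{n→∞} ( γ⁽ⁿ⁾ f(0) + Σ_{k=1}^∞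 α_k⁽ⁿ⁾ f(α_k⁽ⁿ⁾) ) = ∫_{[0,∞)} f dσ, then there exists ω = (α, γ) ∈ Ω with σ = γδ₀ + Σ_{k=1}^∞ α_k δ_{α_k}. -/
open MeasureTheory Filter Set

noncomputable def trap (l p q r x : ℝ) : ℝ :=
  max 0 (min 1 (min ((x - l)/(p - l)) ((r - x)/(r - q))))

lemma trap_cont (l p q r : ℝ) : Continuous (trap l p q r) := by
  unfold trap; fun_prop

lemma trap_nonneg (l p q r x : ℝ) : 0 ≤ trap l p q r x := le_max_left _ _

lemma trap_le_one (l p q r x : ℝ) : trap l p q r x ≤ 1 := by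
  unfold trap
  rcases le_or_gt (min 1 (min ((x - l)/(p - l)) ((r - x)/(r - q)))) 0 with h | h
  · simpa [max_eq_left h] using zero_le_one
  · exact le_trans (le_of_eq (max_eq_right h.le)) (min_le_left _ _)

lemma trap_abs_le (l p q r x : ℝ) : |trap l p q r x| ≤ 1 := by
  rw [abs_of_nonneg (trap_nonneg _ _ _ _ _)]; exact trap_le_one _ _ _ _ _

lemma trap_eq_zero_left (l p q r x : ℝ) (hl : l < p) (hx : x ≤ l) : trap l p q r x = 0 := by
  unfold trap
  have h1 : (x - l)/(p - l) ≤ 0 := div_nonpos_of_nonpos_of_nonneg (by linarith) (by linarith)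
  have : min 1 (min ((x - l)/(p - l)) ((r - x)/(r - q))) ≤ 0 :=
    le_trans (min_le_right _ _) (le_trans (min_le_left _ _) h1)
  exact max_eq_left this

lemma trap_eq_zero_right (l p q r x : ℝ) (hq : q < r) (hx : r ≤ x) : trap l p q r x = 0 := by
  unfold trap
  have h1 : (r - x)/(r - q) ≤ 0 := div_nonpos_of_nonpos_of_nonneg (by linarith) (by linarith)
  have : min 1 (min ((x - l)/(p - l)) ((r - x)/(r - q))) ≤ 0 :=
    le_trans (min_le_right _ _) (le_trans (min_le_right _ _) h1)
  exact max_eq_left this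

lemma trap_eq_one (l p q r x : ℝ) (hl : l < p) (hq : q < r) (h1 : p ≤ x) (h2 : x ≤ q) :
    trap l p q r x = 1 := by
  unfold trap
  have ha : (1:ℝ) ≤ (x - l)/(p - l) := (le_div_iff₀ (by linarith)).2 (by linarith)
  have hb : (1:ℝ) ≤ (r - x)/(r - q) := (le_div_iff₀ (by linarith)).2 (by linarith)
  rw [min_eq_left (le_min ha hb)]
  exact max_eq_right zero_le_one

lemma trap_mem_of_ne_zero {l p q r x : ℝ} (hl : l < p) (hq : q < r)
    (h : trap l p q r x ≠ 0) : x ∈ Set.Ioo l r := by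
  constructor
  · by_contra hc; exact h (trap_eq_zero_left l p q r x hl (by linarith))
  · by_contra hc; exact h (trap_eq_zero_right l p q r x hq (by linarith))

lemma trap_integrable {l p q r : ℝ} (hl : l < p) (hq : q < r) (σ : Measure ℝ)
    [IsFiniteMeasure σ] : Integrable (trap l p q r) σ := by
  refine (trap_cont l p q r).integrable_of_hasCompactSupport ?_
  refine HasCompactSupport.intro (isCompact_Icc (a := l) (b := r)) ?_
  intro x hx
  simp only [Set.mem_Icc, not_and_or, not_le] at hx
  rcases hx with h | h
  · exact trap_eq_zero_left l p q r x hl h.le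
  · exact trap_eq_zero_right l p q r x hq h.le

lemma trap_integral_ub {l p q r : ℝ} (hl : l < p) (hq : q < r) (σ : Measure ℝ)
    [IsFiniteMeasure σ] : ∫ x, trap l p q r x ∂σ ≤ (σ (Set.Ioo l r)).toReal := by
  rw [← measureReal_def, ← MeasureTheory.integral_indicator_one measurableSet_Ioo]
  refine integral_mono (trap_integrable hl hq σ)
    ((integrable_const (1:ℝ)).indicator measurableSet_Ioo) ?_
  intro x
  by_cases hx : x ∈ Set.Ioo l r
  · simp [Set.indicator_of_mem hx, trap_le_one]
  · have h0 : trap l p q r x = 0 := by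
      by_contra h; exact hx (trap_mem_of_ne_zero hl hq h)
    simp [Set.indicator_of_notMem hx, h0]

lemma trap_integral_lb {l p q r : ℝ} (hl : l < p) (hpq : p ≤ q) (hq : q < r) (σ : Measure ℝ)
    [IsFiniteMeasure σ] {s : Set ℝ} (hs : MeasurableSet s) (hsub : s ⊆ Set.Icc p q) :
    (σ s).toReal ≤ ∫ x, trap l p q r x ∂σ := by
  rw [← measureReal_def, ← MeasureTheory.integral_indicator_one hs]
  refine integral_mono ((integrable_const (1:ℝ)).indicator hs) (trap_integrable hl hq σ) ?_
  intro x
  by_cases hx : x ∈ s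
  · rw [Set.indicator_of_mem hx]
    exact le_of_eq (trap_eq_one l p q r x hl hq (hsub hx).1 (hsub hx).2).symm
  · rw [Set.indicator_of_notMem hx]; exact trap_nonneg _ _ _ _ _

open MeasureTheory Filter Set

section scratch
variable (σ : Measure ℝ) [IsFiniteMeasure σ]

lemma finite_gt {a : ℕ → ℝ} (h : Summable a) {l : ℝ} (hl : 0 < l) :
    {k | l < a k}.Finite := by
  have h2 : ∀ᶠ k in Filter.cofinite, a k ∈ Set.Iio l :=
    h.tendsto_cofinite_zero (Iio_mem_nhds hl)
  rw [Filter.eventually_cofinite] at h2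
  exact h2.subset (fun k hk => by simp only [mem_setOf_eq, mem_Iio] at *; linarith)

lemma finite_win {a : ℕ → ℝ} (h : Summable a) {l r : ℝ} (hl : 0 < l) :
    {k | a k ∈ Set.Ioo l r}.Finite :=
  (finite_gt h hl).subset (fun k hk => hk.1)

lemma summable_mul_trap {a : ℕ → ℝ} (h : Summable a) (hnn : ∀ k, 0 ≤ a k) (l p q r : ℝ) :
    Summable (fun k => a k * trap l p q r (a k)) := by
  refine Summable.of_nonneg_of_le (fun k => mul_nonneg (hnn k) (trap_nonneg _ _ _ _ _))
    (fun k => ?_) h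
  calc a k * trap l p q r (a k) ≤ a k * 1 :=
        mul_le_mul_of_nonneg_left (trap_le_one _ _ _ _ _) (hnn k)
    _ = a k := mul_one _

lemma tsum_trap_ub {a : ℕ → ℝ} (h : Summable a) (hnn : ∀ k, 0 ≤ a k) {l p q r : ℝ}
    (hl0 : 0 < l) (hlp : l < p) (hqr : q < r) :
    (∑' k, a k * trap l p q r (a k)) ≤ r * ((finite_win h hl0 (r := r)).toFinset.card) := by
  rw [tsum_eq_sum (s := (finite_win h hl0 (r := r)).toFinset) ?_]
  · refine le_trans (Finset.sum_le_card_nsmul _ _ r ?_) (by rw [nsmul_eq_mul]; ring_nf; rfl)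
    intro k hk
    rw [Set.Finite.mem_toFinset] at hk
    calc a k * trap l p q r (a k) ≤ a k * 1 :=
          mul_le_mul_of_nonneg_left (trap_le_one _ _ _ _ _) (hnn k)
      _ = a k := mul_one _
      _ ≤ r := hk.2.le
  · intro k hk
    rw [Set.Finite.mem_toFinset] at hk
    have : trap l p q r (a k) = 0 := by
      by_contra hc; exact hk (trap_mem_of_ne_zero hlp hqr hc)
    simp [this]

lemma tsum_trap_lb {a : ℕ → ℝ} (h : Summable a) (hnn : ∀ k, 0 ≤ a k) {l p q r : ℝ}
    (hp0 : 0 < p) (hlp : l < p) (hqr : q < r) :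
    p * ((finite_win h hp0 (r := q)).toFinset.card) ≤ ∑' k, a k * trap l p q r (a k) := by
  refine le_trans ?_ (Summable.sum_le_tsum (finite_win h hp0 (r := q)).toFinset
    (fun k _ => mul_nonneg (hnn k) (trap_nonneg _ _ _ _ _))
    (summable_mul_trap h hnn l p q r))
  have : ∀ k ∈ (finite_win h hp0 (r := q)).toFinset, p ≤ a k * trap l p q r (a k) := by
    intro k hk
    rw [Set.Finite.mem_toFinset] at hk
    rw [trap_eq_one l p q r (a k) hlp hqr hk.1.le hk.2.le, mul_one]
    exact hk.1.le
  calc p * ((finite_win h hp0 (r := q)).toFinset.card)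
      = ∑ _k ∈ (finite_win h hp0 (r := q)).toFinset, p := by
        rw [Finset.sum_const, nsmul_eq_mul, mul_comm]
    _ ≤ _ := Finset.sum_le_sum this

end scratch

open MeasureTheory Filter Set

lemma pinch (a : ℕ → ℕ → ℝ) (g : ℕ → ℝ)
    (ha : ∀ n, Summable (a n)) (han : ∀ n k, 0 ≤ a n k) (hg : ∀ n, 0 ≤ g n)
    (σ : Measure ℝ) [IsFiniteMeasure σ]
    (hconv : ∀ f : ℝ → ℝ, Continuous f → (∃ C : ℝ, ∀ x, |f x| ≤ C) →
      Tendsto (fun n => g n * f 0 + ∑' k, a n k * f (a n k)) atTop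
        (nhds (∫ x, f x ∂σ)))
    (y ε δ : ℝ) (hy : 0 < y) (hε : 0 < ε) (hε2 : ε < y/2) (hδ : 0 < δ) :
    ∀ᶠ _n : ℕ in atTop, ∃ c : ℕ,
      (y - ε) * c ≤ (σ (Set.Ioo (y-ε) (y+ε))).toReal + δ ∧
      ∀ s : Set ℝ, MeasurableSet s → s ⊆ Set.Icc (y-ε/4) (y+ε/4) →
        (σ s).toReal - δ ≤ (y + ε) * c := by
  have hp0 : (0:ℝ) < y - ε/2 := by linarith
  have hl0 : (0:ℝ) < y - ε := by linarith
  set fo := trap (y-ε) (y-ε/2) (y+ε/2) (y+ε) with hfo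
  set fi := trap (y-ε/2) (y-ε/4) (y+ε/4) (y+ε/2) with hfi
  have hfo0 : fo 0 = 0 := trap_eq_zero_left _ _ _ _ _ (by linarith) (by linarith)
  have hfi0 : fi 0 = 0 := trap_eq_zero_left _ _ _ _ _ (by linarith) (by linarith)
  have hTo := hconv fo (trap_cont _ _ _ _) ⟨1, trap_abs_le _ _ _ _⟩
  have hTi := hconv fi (trap_cont _ _ _ _) ⟨1, trap_abs_le _ _ _ _⟩
  have h1 : ∀ᶠ n in atTop,
      |(g n * fo 0 + ∑' k, a n k * fo (a n k)) - ∫ x, fo x ∂σ| < δ := by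
    have := Metric.tendsto_atTop.mp hTo δ hδ
    obtain ⟨N, hN⟩ := this
    exact eventually_atTop.2 ⟨N, fun n hn => by simpa [Real.dist_eq] using hN n hn⟩
  have h2 : ∀ᶠ n in atTop,
      |(g n * fi 0 + ∑' k, a n k * fi (a n k)) - ∫ x, fi x ∂σ| < δ := by
    obtain ⟨N, hN⟩ := Metric.tendsto_atTop.mp hTi δ hδ
    exact eventually_atTop.2 ⟨N, fun n hn => by simpa [Real.dist_eq] using hN n hn⟩
  filter_upwards [h1, h2] with n hn1 hn2
  refine ⟨(finite_win (ha n) hp0 (r := y + ε/2)).toFinset.card, ?_, ?_⟩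
  · have lb := tsum_trap_lb (ha n) (han n) (l := y-ε) (p := y-ε/2) (q := y+ε/2) (r := y+ε)
      hp0 (by linarith) (by linarith)
    have hub : ∫ x, fo x ∂σ ≤ (σ (Set.Ioo (y-ε) (y+ε))).toReal :=
      trap_integral_ub (by linarith) (by linarith) σ
    rw [hfo0, mul_zero, zero_add] at hn1
    have := abs_lt.mp hn1
    calc (y - ε) * ((finite_win (ha n) hp0 (r := y + ε/2)).toFinset.card)
        ≤ (y - ε/2) * ((finite_win (ha n) hp0 (r := y + ε/2)).toFinset.card) := by
          have : (0:ℝ) ≤ ((finite_win (ha n) hp0 (r := y + ε/2)).toFinset.card) :=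
            Nat.cast_nonneg _
          nlinarith
      _ ≤ ∑' k, a n k * fo (a n k) := lb
      _ ≤ ∫ x, fo x ∂σ + δ := by linarith [this.2]
      _ ≤ (σ (Set.Ioo (y-ε) (y+ε))).toReal + δ := by linarith
  · intro s hs hsub
    have lb : (σ s).toReal ≤ ∫ x, fi x ∂σ :=
      trap_integral_lb (l := y-ε/2) (p := y-ε/4) (q := y+ε/4) (r := y+ε/2)
        (by linarith) (by linarith) (by linarith) σ hs hsub
    have ub := tsum_trap_ub (ha n) (han n) (l := y-ε/2) (p := y-ε/4) (q := y+ε/4) (r := y+ε/2)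
      hp0 (by linarith) (by linarith)
    rw [hfi0, mul_zero, zero_add] at hn2
    have h := abs_lt.mp hn2
    calc (σ s).toReal - δ ≤ ∫ x, fi x ∂σ - δ := by linarith
      _ ≤ ∑' k, a n k * fi (a n k) := by linarith [h.1]
      _ ≤ (y + ε/2) * ((finite_win (ha n) hp0 (r := y + ε/2)).toFinset.card) := ub
      _ ≤ (y + ε) * ((finite_win (ha n) hp0 (r := y + ε/2)).toFinset.card) := by
          have : (0:ℝ) ≤ ((finite_win (ha n) hp0 (r := y + ε/2)).toFinset.card) :=
            Nat.cast_nonneg _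
          nlinarith

open MeasureTheory Filter Set

lemma window_shrink (σ : Measure ℝ) [IsFiniteMeasure σ] (y : ℝ) (hy : 0 < y) :
    ∀ δ > 0, ∃ ε : ℝ, 0 < ε ∧ ε < y/2 ∧ ε ≤ δ ∧
      (σ (Set.Ioo (y-ε) (y+ε))).toReal < (σ {y}).toReal + δ := by
  intro δ hδ
  set w : ℕ → ℝ := fun i => (y/2) / (i+2) with hw
  have hwpos : ∀ i, 0 < w i := fun i =>
    div_pos (by linarith) (by positivity)
  have hwlt : ∀ i, w i < y/2 := by
    intro i
    rw [hw]
    rw [div_lt_iff₀ (by positivity)]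
    nlinarith [Nat.cast_nonneg (α := ℝ) i]
  have hanti : Antitone (fun i => Set.Ioo (y - w i) (y + w i)) := by
    intro i j hij
    have : w j ≤ w i := by
      apply div_le_div_of_nonneg_left (by linarith) (by positivity)
      exact_mod_cast by exact_mod_cast add_le_add_left (Nat.cast_le.2 hij) 2
    exact Set.Ioo_subset_Ioo (by linarith) (by linarith)
  have hiInter : ⋂ i, Set.Ioo (y - w i) (y + w i) = {y} := by
    ext z
    simp only [Set.mem_iInter, Set.mem_Ioo, Set.mem_singleton_iff]
    constructor
    · intro h
      by_contra hz
      have hd : 0 < |z - y| := abs_pos.2 (sub_ne_zero.2 hz)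
      obtain ⟨i, hi⟩ := exists_nat_gt ((y/2) / |z - y|)
      have : w i < |z - y| := by
        rw [hw, div_lt_iff₀ (by positivity)]
        rw [div_lt_iff₀ hd] at hi
        nlinarith [abs_nonneg (z - y), Nat.cast_nonneg (α := ℝ) i]
      obtain ⟨h1, h2⟩ := h i
      rcases abs_cases (z - y) with ⟨he, _⟩ | ⟨he, _⟩ <;> rw [he] at this <;> linarith
    · rintro rfl
      exact fun i => ⟨by linarith [hwpos i], by linarith [hwpos i]⟩
  have htend : Tendsto (fun i => σ (Set.Ioo (y - w i) (y + w i))) atTop (nhds (σ {y})) := by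
    have := tendsto_measure_iInter_atTop (μ := σ)
      (s := fun i => Set.Ioo (y - w i) (y + w i))
      (fun i => measurableSet_Ioo.nullMeasurableSet) hanti
      ⟨0, measure_ne_top σ _⟩
    rwa [hiInter] at this
  have hfin : σ {y} ≠ ⊤ := measure_ne_top σ _
  have : ∀ᶠ i in atTop, σ (Set.Ioo (y - w i) (y + w i)) < σ {y} + ENNReal.ofReal δ := by
    apply htend.eventually_lt_const
    exact ENNReal.lt_add_right hfin (ENNReal.ofReal_pos.2 hδ).ne'
  obtain ⟨i, hi⟩ := this.exists
  obtain ⟨j, hj⟩ := exists_nat_gt ((y/2) / δ)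
  -- choose index large enough that w is small: use max
  set i' := max i j with hi'
  have hmono : σ (Set.Ioo (y - w i') (y + w i')) ≤ σ (Set.Ioo (y - w i) (y + w i)) :=
    measure_mono (hanti (le_max_left i j))
  refine ⟨w i', hwpos i', hwlt i', ?_, ?_⟩
  · have hji' : (j:ℝ) ≤ (i':ℝ) := Nat.cast_le.2 (le_max_right i j)
    rw [hw]
    rw [div_le_iff₀ (by positivity)]
    rw [div_lt_iff₀ hδ] at hj
    nlinarith [Nat.cast_nonneg (α := ℝ) j]
  · have hlt : σ (Set.Ioo (y - w i') (y + w i')) < σ {y} + ENNReal.ofReal δ :=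
      lt_of_le_of_lt hmono hi
    have := ENNReal.toReal_mono (by simp [hfin, ENNReal.ofReal_ne_top]) hlt.le
    rw [ENNReal.toReal_add hfin ENNReal.ofReal_ne_top, ENNReal.toReal_ofReal hδ.le] at this
    rcases lt_or_eq_of_le this with h | h
    · exact h
    · -- boundary case: strict inequality needed; use strict toReal_lt
      have hne : σ (Set.Ioo (y - w i') (y + w i')) ≠ ⊤ := measure_ne_top σ _
      have := (ENNReal.toReal_lt_toReal hne (by simp [hfin, ENNReal.ofReal_ne_top])).2 hlt
      rwa [ENNReal.toReal_add hfin ENNReal.ofReal_ne_top, ENNReal.toReal_ofReal hδ.le] at this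

open MeasureTheory Filter Set

lemma atom_mult (a : ℕ → ℕ → ℝ) (g : ℕ → ℝ)
    (ha : ∀ n, Summable (a n)) (han : ∀ n k, 0 ≤ a n k) (hg : ∀ n, 0 ≤ g n)
    (σ : Measure ℝ) [IsFiniteMeasure σ]
    (hconv : ∀ f : ℝ → ℝ, Continuous f → (∃ C : ℝ, ∀ x, |f x| ≤ C) →
      Tendsto (fun n => g n * f 0 + ∑' k, a n k * f (a n k)) atTop
        (nhds (∫ x, f x ∂σ)))
    (y : ℝ) (hy : 0 < y) : ∃ m : ℕ, (σ {y}).toReal = m * y := by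
  set s := (σ {y}).toReal with hs
  set S := (σ Set.univ).toReal with hS
  have hS0 : 0 ≤ S := ENNReal.toReal_nonneg
  set B' := 2*(S+1)/y with hB'
  have hB'0 : 0 ≤ B' := by positivity
  have key : ∀ η : ℝ, 0 < η → ∃ m : ℕ, (m:ℝ) ≤ B' ∧ |s - m*y| ≤ η := by
    intro η hη
    set δ := min 1 (η/(2+B')) with hδdef
    have hδ : 0 < δ := lt_min one_pos (by positivity)
    have hδ1 : δ ≤ 1 := min_le_left _ _
    have hδ2 : δ * (2 + B') ≤ η := by
      have : δ ≤ η/(2+B') := min_le_right _ _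
      rw [le_div_iff₀ (by positivity)] at this
      linarith
    obtain ⟨ε, hε, hε2, hεδ, hwin⟩ := window_shrink σ y hy δ hδ
    obtain ⟨_n, c, h1, h2⟩ := (pinch a g ha han hg σ hconv y ε δ hy hε hε2 hδ).exists
    have h2' := h2 {y} (measurableSet_singleton y)
      (by intro z hz; rw [Set.mem_singleton_iff] at hz; subst hz
          exact ⟨by linarith, by linarith⟩)
    have hc0 : (0:ℝ) ≤ (c:ℝ) := Nat.cast_nonneg _
    have hIS : (σ (Set.Ioo (y-ε) (y+ε))).toReal ≤ S :=
      ENNReal.toReal_mono (measure_ne_top σ _) (measure_mono (Set.subset_univ _))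
    have hs0 : 0 ≤ s := ENNReal.toReal_nonneg
    have hcB : (c:ℝ) ≤ B' := by
      have hyc : (y/2) * c ≤ S + 1 := by nlinarith
      rw [hB']
      rw [le_div_iff₀ hy]
      nlinarith
    refine ⟨c, hcB, ?_⟩
    rw [abs_le]
    have hεc : ε * c ≤ δ * B' := by nlinarith
    constructor
    · nlinarith
    · nlinarith
  by_contra hcon
  push_neg at hcon
  set B := ⌊B'⌋₊ with hB
  set F := Finset.range (B+1) with hF
  have hFne : (F.image (fun m : ℕ => |s - (m:ℝ)*y|)).Nonempty :=
    Finset.Nonempty.image ⟨0, Finset.mem_range.2 (Nat.succ_pos B)⟩ _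
  set η := (F.image (fun m : ℕ => |s - (m:ℝ)*y|)).min' hFne with hη
  have hηpos : 0 < η := by
    have := (F.image (fun m : ℕ => |s - (m:ℝ)*y|)).min'_mem hFne
    rw [Finset.mem_image] at this
    obtain ⟨m, _, hm⟩ := this
    rw [hη, ← hm]
    exact abs_pos.2 (sub_ne_zero.2 (hcon m))
  obtain ⟨m, hmB, hmη⟩ := key (η/2) (by linarith)
  have hmF : m ∈ F := Finset.mem_range.2 (Nat.lt_succ_of_le (Nat.le_floor hmB))
  have : η ≤ |s - m*y| :=
    (F.image (fun m : ℕ => |s - (m:ℝ)*y|)).min'_le _ (Finset.mem_image_of_mem _ hmF)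
  linarith

lemma null_window (a : ℕ → ℕ → ℝ) (g : ℕ → ℝ)
    (ha : ∀ n, Summable (a n)) (han : ∀ n k, 0 ≤ a n k) (hg : ∀ n, 0 ≤ g n)
    (σ : Measure ℝ) [IsFiniteMeasure σ]
    (hconv : ∀ f : ℝ → ℝ, Continuous f → (∃ C : ℝ, ∀ x, |f x| ≤ C) →
      Tendsto (fun n => g n * f 0 + ∑' k, a n k * f (a n k)) atTop
        (nhds (∫ x, f x ∂σ)))
    (y : ℝ) (hy : 0 < y) (h0 : σ {y} = 0) :
    ∃ ε : ℝ, 0 < ε ∧ σ (Set.Ioo (y-ε) (y+ε)) = 0 := by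
  obtain ⟨ε, hε, hε2, _, hwin⟩ := window_shrink σ y hy (y/8) (by linarith)
  rw [h0, ENNReal.toReal_zero, zero_add] at hwin
  have hkey : ∀ δ' : ℝ, 0 < δ' → δ' ≤ y/8 →
      (σ (Set.Ioo (y-ε/4) (y+ε/4))).toReal ≤ δ' := by
    intro δ' hδ' hδ'2
    obtain ⟨_n, c, h1, h2⟩ := (pinch a g ha han hg σ hconv y ε δ' hy hε hε2 hδ').exists
    have hc : c = 0 := by
      by_contra hc
      have h1c : (1:ℝ) ≤ (c:ℝ) := Nat.one_le_cast.2 (Nat.pos_of_ne_zero hc)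
      have : (y - ε) * 1 ≤ (y - ε) * c :=
        mul_le_mul_of_nonneg_left h1c (by linarith)
      nlinarith
    have h2' := h2 (Set.Ioo (y-ε/4) (y+ε/4)) measurableSet_Ioo
      (Set.Ioo_subset_Icc_self)
    rw [hc] at h2'
    push_cast at h2'
    linarith
  have hle0 : (σ (Set.Ioo (y-ε/4) (y+ε/4))).toReal ≤ 0 := by
    by_contra hpos
    push_neg at hpos
    have := hkey (min ((σ (Set.Ioo (y-ε/4) (y+ε/4))).toReal / 2) (y/8))
      (lt_min (by linarith) (by linarith)) (min_le_right _ _)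
    have h2 := min_le_left ((σ (Set.Ioo (y-ε/4) (y+ε/4))).toReal / 2) (y/8)
    linarith
  refine ⟨ε/4, by linarith, ?_⟩
  have := le_antisymm hle0 ENNReal.toReal_nonneg
  rwa [ENNReal.toReal_eq_zero_iff, or_iff_left (measure_ne_top σ _)] at this

open MeasureTheory Filter Set
open scoped ENNReal

/-- The family of measures `σ_ω = γδ₀ + Σ_j α_j δ_{α_j}` on `[0,∞)`,
for `ω = (α,γ)` with `α` a summable sequence of nonnegative reals and `γ ≥ 0`, is weakly
closed among finite positive measures on `[0,∞)`: if
`γ⁽ⁿ⁾ f(0) + Σ_k α_k⁽ⁿ⁾ f(α_k⁽ⁿ⁾) → ∫ f dσ` for every bounded continuous `f`, then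
`σ = γδ₀ + Σ_k α_k δ_{α_k}` for some parameter `(α,γ)`. -/
theorem polya_parameter_set_weakly_closed
    (a : ℕ → ℕ → ℝ) (g : ℕ → ℝ)
    (ha : ∀ n, Summable (a n)) (han : ∀ n k, 0 ≤ a n k) (hg : ∀ n, 0 ≤ g n)
    (σ : Measure ℝ) [IsFiniteMeasure σ] (hσ : σ (Set.Iio 0) = 0)
    (hconv : ∀ f : ℝ → ℝ, Continuous f → (∃ C : ℝ, ∀ x, |f x| ≤ C) →
      Tendsto (fun n => g n * f 0 + ∑' k, a n k * f (a n k)) atTop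
        (nhds (∫ x, f x ∂σ))) :
    ∃ (α : ℕ → ℝ) (γ : ℝ), Summable α ∧ (∀ k, 0 ≤ α k) ∧ 0 ≤ γ ∧
      σ = ENNReal.ofReal γ • Measure.dirac (0 : ℝ) +
        Measure.sum (fun k : ℕ => ENNReal.ofReal (α k) • Measure.dirac (α k)) := by
  classical
  set S : Set ℝ := {x | 0 < x ∧ σ {x} ≠ 0} with hSdef
  have hScnt : S.Countable := by
    have hdisj : Pairwise (Function.onFun Disjoint fun x : ℝ => ({x} : Set ℝ)) := by
      intro x y hxy
      simp [Function.onFun, Set.disjoint_singleton_left, hxy]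
    have h := MeasureTheory.Measure.countable_meas_pos_of_disjoint_iUnion (μ := σ)
      (As := fun x : ℝ => ({x} : Set ℝ)) (fun x => measurableSet_singleton x) hdisj
    exact h.mono (fun x hx => pos_iff_ne_zero.2 hx.2)
  -- the diffuse part of `(0,∞)` is null
  have atomnull : σ (Set.Ioi 0 \ S) = 0 := by
    have hz : ∀ z : ↥(Set.Ioi 0 \ S), ∃ ε : ℝ, 0 < ε ∧
        σ (Set.Ioo ((z:ℝ)-ε) ((z:ℝ)+ε)) = 0 := by
      intro z
      have hz1 : (0:ℝ) < (z:ℝ) := z.2.1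
      have hz2 : σ {(z:ℝ)} = 0 := by
        have := z.2.2
        simp only [hSdef, Set.mem_setOf_eq, not_and, not_not] at this
        exact this hz1
      exact null_window a g ha han hg σ hconv z hz1 hz2
    choose εf hε0 hεnull using hz
    obtain ⟨T, hTc, hTU⟩ := TopologicalSpace.isOpen_iUnion_countable
      (fun z : ↥(Set.Ioi 0 \ S) => Set.Ioo ((z:ℝ) - εf z) ((z:ℝ) + εf z))
      (fun z => isOpen_Ioo)
    refine measure_mono_null
      (t := ⋃ z : ↥(Set.Ioi 0 \ S), Set.Ioo ((z:ℝ) - εf z) ((z:ℝ) + εf z)) ?_ ?_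
    · intro x hx
      have h0 := hε0 (⟨x, hx⟩ : ↥(Set.Ioi 0 \ S))
      have hc : ((⟨x, hx⟩ : ↥(Set.Ioi 0 \ S)) : ℝ) = x := rfl
      refine Set.mem_iUnion.2 ⟨⟨x, hx⟩, ?_⟩
      rw [Set.mem_Ioo, hc]
      constructor <;> linarith
    · rw [← hTU]
      exact (measure_biUnion_null_iff hTc).2 (fun z _ => hεnull z)
  -- multiplicities
  have hM : ∀ z : ↥S, ∃ m : ℕ, (σ {(z:ℝ)}).toReal = m * (z:ℝ) :=
    fun z => atom_mult a g ha han hg σ hconv z z.2.1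
  choose M hMspec using hM
  have : Countable ↥S := hScnt.to_subtype
  obtain ⟨inj, hinj⟩ := Countable.exists_injective_nat ↥S
  set val : ℕ → ℝ := fun i =>
    if h : ∃ z : ↥S, inj z = i then ((Classical.choose h : ↥S) : ℝ) else 0 with hval
  set mult : ℕ → ℕ := fun i =>
    if h : ∃ z : ↥S, inj z = i then M (Classical.choose h) else 0 with hmult
  have val_inj : ∀ z : ↥S, val (inj z) = (z:ℝ) := by
    intro z
    have h : ∃ w : ↥S, inj w = inj z := ⟨z, rfl⟩
    show (if h : ∃ w : ↥S, inj w = inj z then ((Classical.choose h : ↥S) : ℝ) else 0) = (z:ℝ)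
    rw [dif_pos h]
    exact congrArg _ (hinj (Classical.choose_spec h))
  have mult_inj : ∀ z : ↥S, mult (inj z) = M z := by
    intro z
    have h : ∃ w : ↥S, inj w = inj z := ⟨z, rfl⟩
    show (if h : ∃ w : ↥S, inj w = inj z then M (Classical.choose h) else 0) = M z
    rw [dif_pos h]
    exact congrArg _ (hinj (Classical.choose_spec h))
  have val_nonneg : ∀ i, 0 ≤ val i := by
    intro i
    show 0 ≤ if h : ∃ z : ↥S, inj z = i then ((Classical.choose h : ↥S) : ℝ) else 0
    by_cases h : ∃ z : ↥S, inj z = i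
    · rw [dif_pos h]
      exact le_of_lt (Classical.choose h).2.1
    · rw [dif_neg h]
  set e : ℕ ≃ ℕ × ℕ := Nat.pairEquiv.symm with he
  set A : ℕ × ℕ → ℝ := fun p => if p.2 < mult p.1 then val p.1 else 0 with hA
  set α : ℕ → ℝ := fun k => A (e k) with hα
  have α_nonneg : ∀ k, 0 ≤ α k := by
    intro k
    rw [hα, hA]
    by_cases h : (e k).2 < mult (e k).1
    · simp only [if_pos h]; exact val_nonneg _
    · simp [if_neg h]
  -- the key computation
  have key : ∀ E : Set ℝ, MeasurableSet E →
      (Measure.sum (fun k : ℕ => ENNReal.ofReal (α k) • Measure.dirac (α k))) E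
        = σ (E ∩ Set.Ioi 0) := by
    intro E hE
    rw [Measure.sum_apply _ hE]
    set D : ℝ → ℝ≥0∞ := fun x => E.indicator (1 : ℝ → ℝ≥0∞) x with hD
    have happ : ∀ k, (ENNReal.ofReal (α k) • Measure.dirac (α k)) E
        = ENNReal.ofReal (α k) * D (α k) := by
      intro k
      rw [Measure.smul_apply, smul_eq_mul, Measure.dirac_apply' _ hE]
    calc (∑' k, (ENNReal.ofReal (α k) • Measure.dirac (α k)) E)
        = ∑' k, ENNReal.ofReal (A (e k)) * D (A (e k)) := by
          refine tsum_congr (fun k => ?_); rw [happ k]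
      _ = ∑' p : ℕ × ℕ, ENNReal.ofReal (A p) * D (A p) :=
          Equiv.tsum_eq e (fun p => ENNReal.ofReal (A p) * D (A p))
      _ = ∑' (i : ℕ) (j : ℕ), ENNReal.ofReal (A (i, j)) * D (A (i, j)) :=
          ENNReal.tsum_prod'
      _ = ∑' i : ℕ, (mult i : ℝ≥0∞) * (ENNReal.ofReal (val i) * D (val i)) := by
          refine tsum_congr (fun i => ?_)
          rw [tsum_eq_sum (s := Finset.range (mult i)) ?_]
          · rw [Finset.sum_congr rfl (fun j hj => ?_), Finset.sum_const, nsmul_eq_mul,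
              Finset.card_range]
            rw [hA]
            simp only [if_pos (Finset.mem_range.1 hj)]
          · intro j hj
            rw [hA]
            simp only [if_neg (fun hc => hj (Finset.mem_range.2 hc))]
            simp
      _ = ∑' i : ℕ, (if h : ∃ z : ↥S, inj z = i then σ {val i} * D (val i) else 0) := by
          refine tsum_congr (fun i => ?_)
          by_cases h : ∃ z : ↥S, inj z = i
          · rw [dif_pos h]
            have h1 : val i = ((Classical.choose h : ↥S) : ℝ) := by
              show (if h : ∃ z : ↥S, inj z = i then ((Classical.choose h : ↥S) : ℝ) else 0) = _
              rw [dif_pos h]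
            have h2 : mult i = M (Classical.choose h) := by
              show (if h : ∃ z : ↥S, inj z = i then M (Classical.choose h) else 0) = _
              rw [dif_pos h]
            have h3 : σ {val i} = ENNReal.ofReal ((mult i : ℝ) * val i) := by
              rw [h1, h2, ← hMspec (Classical.choose h),
                ENNReal.ofReal_toReal (measure_ne_top σ _)]
            rw [h3, ← mul_assoc, ← ENNReal.ofReal_natCast (mult i),
              ← ENNReal.ofReal_mul (Nat.cast_nonneg _)]
          · rw [dif_neg h]
            have h2 : mult i = 0 := by
              show (if h : ∃ z : ↥S, inj z = i then M (Classical.choose h) else 0) = 0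
              rw [dif_neg h]
            rw [h2]
            simp
      _ = ∑' z : ↥S, σ {(z:ℝ)} * D (z:ℝ) := by
          rw [← Function.Injective.tsum_eq hinj ?_]
          · refine tsum_congr (fun z => ?_)
            rw [dif_pos ⟨z, rfl⟩, val_inj z]
          · intro i hi
            rw [Function.mem_support] at hi
            by_contra hr
            exact hi (dif_neg (fun ⟨z, hz⟩ => hr ⟨z, hz⟩))
      _ = ∑' z : ↥S, σ ({(z:ℝ)} ∩ E) := by
          refine tsum_congr (fun z => ?_)
          by_cases hz : (z:ℝ) ∈ E
          · rw [hD]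
            simp only [Set.indicator_of_mem hz, Pi.one_apply, mul_one]
            congr 1
            rw [Set.inter_eq_left.2 (Set.singleton_subset_iff.2 hz)]
          · rw [hD]
            simp only [Set.indicator_of_notMem hz, mul_zero]
            rw [Set.singleton_inter_eq_empty.2 hz, measure_empty]
      _ = σ (⋃ z : ↥S, ({(z:ℝ)} ∩ E)) := by
          rw [measure_iUnion ?_ (fun z => (measurableSet_singleton _).inter hE)]
          intro z w hzw
          refine Set.disjoint_left.2 (fun x hx hx' => ?_)
          rcases hx with ⟨hx1, _⟩
          rcases hx' with ⟨hx2, _⟩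
          rw [Set.mem_singleton_iff] at hx1 hx2
          exact hzw (Subtype.ext (hx1 ▸ hx2 ▸ rfl))
      _ = σ (S ∩ E) := by
          congr 1
          ext x
          simp only [Set.mem_iUnion, Set.mem_inter_iff, Set.mem_singleton_iff]
          constructor
          · rintro ⟨z, rfl, hxE⟩; exact ⟨z.2, hxE⟩
          · rintro ⟨hxS, hxE⟩; exact ⟨⟨x, hxS⟩, rfl, hxE⟩
      _ = σ (E ∩ Set.Ioi 0) := by
          refine le_antisymm (measure_mono (fun x hx => ⟨hx.2, hx.1.1⟩)) ?_
          calc σ (E ∩ Set.Ioi 0) ≤ σ ((S ∩ E) ∪ (Set.Ioi 0 \ S)) := by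
                refine measure_mono (fun x hx => ?_)
                by_cases hxS : x ∈ S
                · exact Or.inl ⟨hxS, hx.1⟩
                · exact Or.inr ⟨hx.2, hxS⟩
            _ ≤ σ (S ∩ E) + σ (Set.Ioi 0 \ S) := measure_union_le _ _
            _ = σ (S ∩ E) := by rw [atomnull, add_zero]
  -- summability
  have hsum : Summable α := by
    have h := key Set.univ MeasurableSet.univ
    rw [Measure.sum_apply _ MeasurableSet.univ] at h
    have h2 : ∀ k, (ENNReal.ofReal (α k) • Measure.dirac (α k)) Set.univ
        = ENNReal.ofReal (α k) := by
      intro k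
      rw [Measure.smul_apply, smul_eq_mul, Measure.dirac_apply' _ MeasurableSet.univ]
      simp
    rw [tsum_congr h2] at h
    have hne : (∑' k, ENNReal.ofReal (α k)) ≠ ⊤ := by
      rw [h]; exact measure_ne_top σ _
    have := ENNReal.summable_toReal hne
    exact this.congr (fun k => ENNReal.toReal_ofReal (α_nonneg k))
  refine ⟨α, (σ {0}).toReal, hsum, α_nonneg, ENNReal.toReal_nonneg, ?_⟩
  ext E hE
  rw [Measure.add_apply, Measure.smul_apply, smul_eq_mul, Measure.dirac_apply' _ hE,
    key E hE, ENNReal.ofReal_toReal (measure_ne_top σ _)]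
  have h0 : σ {0} * E.indicator (1 : ℝ → ℝ≥0∞) 0 = σ (E ∩ {0}) := by
    by_cases hz : (0:ℝ) ∈ E
    · simp only [Set.indicator_of_mem hz, Pi.one_apply, mul_one]
      congr 1
      rw [Set.inter_eq_right.2 (Set.singleton_subset_iff.2 hz)]
    · simp only [Set.indicator_of_notMem hz, mul_zero]
      rw [Set.inter_comm, Set.singleton_inter_eq_empty.2 hz, measure_empty]
  rw [h0]
  -- σ E = σ (E ∩ {0}) + σ (E ∩ Ioi 0)
  have hEdecomp : σ E = σ (E ∩ Set.Ici 0) := by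
    refine le_antisymm ?_ (measure_mono (Set.inter_subset_left))
    calc σ E ≤ σ ((E ∩ Set.Ici 0) ∪ (E ∩ Set.Iio 0)) := by
          refine measure_mono (fun x hx => ?_)
          rcases le_or_gt 0 x with h | h
          · exact Or.inl ⟨hx, h⟩
          · exact Or.inr ⟨hx, h⟩
      _ ≤ σ (E ∩ Set.Ici 0) + σ (E ∩ Set.Iio 0) := measure_union_le _ _
      _ = σ (E ∩ Set.Ici 0) := by
          rw [measure_mono_null (Set.inter_subset_right) hσ, add_zero]
  have hsplit : E ∩ Set.Ici 0 = (E ∩ {0}) ∪ (E ∩ Set.Ioi 0) := by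
    ext x
    simp only [Set.mem_inter_iff, Set.mem_union, Set.mem_Ici, Set.mem_Ioi,
      Set.mem_singleton_iff]
    constructor
    · rintro ⟨hxE, hx0⟩
      rcases eq_or_lt_of_le hx0 with h | h
      · exact Or.inl ⟨hxE, h.symm⟩
      · exact Or.inr ⟨hxE, h⟩
    · rintro (⟨hxE, rfl⟩ | ⟨hxE, h⟩)
      · exact ⟨hxE, le_refl 0⟩
      · exact ⟨hxE, h.le⟩
  rw [hEdecomp, hsplit, measure_union ?_ (hE.inter measurableSet_Ioi)]
  refine Set.disjoint_left.2 (fun x hx hx' => ?_)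
  rcases hx with ⟨_, hx0⟩
  rcases hx' with ⟨_, hxpos⟩
  rw [Set.mem_singleton_iff] at hx0
  subst hx0
  exact lt_irrefl 0 (Set.mem_Ioi.1 hxpos)
end
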